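/- arXiv:1509.01790 — 5 statements merged into one kernel-verified Lean document; each statement's English description precedes it below -/
import Mathlib

section
/- Let M be a nonempty compact Hausdorff topological space and let E be a convex cone of continuous real-valued functions on M (stable under addition and under multiplication by nonnegative reals) that contains all constant functions and separates the points of M. Let X ⊆ M be a compact subset such that every function of E attains its maximum over M at some point of X. Let u : X → ℝ be a bounded lower semicontinuous function, and for z ∈ M set û(z) := sup{v(z) : v ∈ E and v(x) ≤ u(x) for all x ∈ X}. Then for every z ∈ M the set of Jensen measures for z with respect to E supported on X is nonempty, and û(z) = inf{∫ u dμ : μ a Jensen measure for z with respect to E supported on X}. -/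
open MeasureTheory

open MeasureTheory Set BoundedContinuousFunction NNReal ENNReal TopologicalSpace

namespace CE
lemma telescope {ε : ℝ} (hε : 0 < ε) : ∀ (n : ℕ) (t : ℝ), 0 ≤ t → t ≤ n * ε →
    ∑ j ∈ Finset.range n, min (max (t - j * ε) 0) ε = t := by
  intro n
  induction n with
  | zero => intro t ht0 htn; simp only [Nat.cast_zero, zero_mul] at htn; simp [le_antisymm htn ht0]
  | succ m ih =>
    intro t ht0 htn
    rw [Finset.sum_range_succ]
    rcases le_or_gt t (m * ε) with h | h
    · rw [ih t ht0 h]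
      have : t - m * ε ≤ 0 := by linarith
      rw [max_eq_right this, min_eq_left hε.le]
      ring
    · have hall : ∀ j ∈ Finset.range m, min (max (t - j * ε) 0) ε = ε := by
        intro j hj
        have hj' : (j : ℝ) ≤ (m : ℝ) - 1 := by
          have := Finset.mem_range.mp hj
          have : (j : ℝ) + 1 ≤ (m : ℝ) := by exact_mod_cast this
          linarith
        have h1 : ε ≤ t - j * ε := by nlinarith
        rw [max_eq_left (by linarith), min_eq_right h1]
      rw [Finset.sum_congr rfl hall, Finset.sum_const, Finset.card_range]
      have h2 : max (t - m * ε) 0 = t - m * ε := max_eq_left (by linarith)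
      have h3 : t - m * ε ≤ ε := by push_cast at htn ⊢; linarith
      rw [h2, min_eq_left h3]
      push_cast
      ring

lemma slice_integral_le {T : Type*} [MeasurableSpace T] (μ : Measure T) [IsFiniteMeasure μ]
    (φ : T → ℝ) (hφm : Measurable φ) {ε : ℝ} (hε : 0 < ε) (n : ℕ)
    (h0 : ∀ x, 0 ≤ φ x) (hn : ∀ x, φ x ≤ n * ε) :
    ∫ x, φ x ∂μ ≤ ε * (μ Set.univ).toReal +
      ∑ j ∈ Finset.Icc 1 (n - 1), ε * (μ {x | (j : ℝ) * ε < φ x}).toReal := by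
  rcases Nat.eq_zero_or_pos n with rfl | hn1
  · have : ∀ x, φ x = 0 := fun x => le_antisymm (by simpa using hn x) (h0 x)
    simp only [this]
    simp [mul_nonneg hε.le ENNReal.toReal_nonneg]
  -- slices
  set s : ℕ → T → ℝ := fun j x => min (max (φ x - j * ε) 0) ε with hs
  have hsm : ∀ j, Measurable (s j) := by
    intro j
    exact ((hφm.sub measurable_const).max measurable_const).min measurable_const
  have hs0 : ∀ j x, 0 ≤ s j x := fun j x => le_min (le_max_right _ _) hε.le
  have hsε : ∀ j x, s j x ≤ ε := fun j x => min_le_right _ _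
  have hint : ∀ j, Integrable (s j) μ := by
    intro j
    refine (integrable_const ε).mono' (hsm j).aestronglyMeasurable ?_
    exact Filter.Eventually.of_forall fun x => by
      rw [Real.norm_eq_abs, abs_of_nonneg (hs0 j x)]; exact hsε j x
  have hsum : ∀ x, φ x = ∑ j ∈ Finset.range n, s j x := by
    intro x; rw [telescope hε n (φ x) (h0 x) (hn x)]
  have hφint : Integrable φ μ := by
    refine (integrable_const ((n : ℝ) * ε)).mono' hφm.aestronglyMeasurable ?_
    exact Filter.Eventually.of_forall fun x => by
      rw [Real.norm_eq_abs, abs_of_nonneg (h0 x)]; exact hn x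
  calc ∫ x, φ x ∂μ = ∑ j ∈ Finset.range n, ∫ x, s j x ∂μ := by
        rw [← integral_finset_sum _ fun j _ => hint j]
        exact integral_congr_ae (Filter.Eventually.of_forall fun x => hsum x)
    _ ≤ ∑ j ∈ Finset.range n, ε * (μ {x | (j : ℝ) * ε < φ x}).toReal := by
        refine Finset.sum_le_sum fun j _ => ?_
        have hA : MeasurableSet {x | (j : ℝ) * ε < φ x} := measurableSet_lt measurable_const hφm
        have hind : ∀ x, s j x ≤ Set.indicator {x | (j : ℝ) * ε < φ x} (fun _ => ε) x := by
          intro x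
          by_cases hx : x ∈ {x | (j : ℝ) * ε < φ x}
          · rw [Set.indicator_of_mem hx]; exact hsε j x
          · rw [Set.indicator_of_notMem hx]
            simp only [Set.mem_setOf_eq, not_lt] at hx
            have : max (φ x - j * ε) 0 = 0 := max_eq_right (by linarith)
            rw [hs]; simp only [this]; exact min_le_left _ _ |>.trans le_rfl
        calc ∫ x, s j x ∂μ ≤ ∫ x, Set.indicator {x | (j : ℝ) * ε < φ x} (fun _ => ε) x ∂μ :=
              integral_mono (hint j) ((integrable_const ε).indicator hA) hind
          _ = (μ {x | (j : ℝ) * ε < φ x}).toReal * ε := by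
              rw [integral_indicator_const _ hA]; simp [smul_eq_mul, Measure.real]
          _ = ε * (μ {x | (j : ℝ) * ε < φ x}).toReal := mul_comm _ _
    _ ≤ ε * (μ Set.univ).toReal +
          ∑ j ∈ Finset.Icc 1 (n - 1), ε * (μ {x | (j : ℝ) * ε < φ x}).toReal := by
        have hsplit : Finset.range n = insert 0 (Finset.Icc 1 (n - 1)) := by
          ext j
          simp only [Finset.mem_range, Finset.mem_insert, Finset.mem_Icc]
          omega
        rw [hsplit, Finset.sum_insert (by simp)]
        have : (μ {x | (0:ℝ) * ε < φ x}).toReal ≤ (μ Set.univ).toReal :=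
          ENNReal.toReal_mono (measure_ne_top μ _) (measure_mono (Set.subset_univ _))
        push_cast
        nlinarith [ENNReal.toReal_nonneg (a := μ Set.univ)]

variable {T : Type*} [TopologicalSpace T] [CompactSpace T] [T2Space T] [Nonempty T]

def mkC (f : C(T, ℝ≥0)) : CompactlySupportedContinuousMap T ℝ≥0 := ⟨f, HasCompactSupport.of_compactSpace f⟩

@[simp] lemma mkC_apply (f : C(T, ℝ≥0)) (x : T) : mkC f x = f x := rfl

/-- view a bounded continuous `ℝ≥0`-valued function as a real continuous map -/
def toRealCM (f : CompactlySupportedContinuousMap T ℝ≥0) : C(T, ℝ) := ⟨fun x => (f x : ℝ), by continuity⟩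

variable (L : C(T, ℝ) →ₗ[ℝ] ℝ)

lemma L_mono (hpos : ∀ f : C(T, ℝ), (∀ x, 0 ≤ f x) → 0 ≤ L f)
    {f g : C(T, ℝ)} (h : ∀ x, f x ≤ g x) : L f ≤ L g := by
  have := hpos (g - f) fun x => by simpa using h x
  have h2 : L (g - f) = L g - L f := by rw [map_sub]
  linarith [h2 ▸ this]

/-- the `ℝ≥0`-linear functional induced by `L` -/
noncomputable def lam (hpos : ∀ f : C(T, ℝ), (∀ x, 0 ≤ f x) → 0 ≤ L f) :
    CompactlySupportedContinuousMap T ℝ≥0 →ₗ[ℝ≥0] ℝ≥0 where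
  toFun f := (L (toRealCM f)).toNNReal
  map_add' f g := by
    have h1 : toRealCM (f + g) = toRealCM f + toRealCM g := by
      ext x; simp [toRealCM]
    rw [h1, map_add, Real.toNNReal_add
      (hpos _ fun x => (f x).coe_nonneg) (hpos _ fun x => (g x).coe_nonneg)]
  map_smul' c f := by
    simp only [RingHom.id_apply]
    have h1 : toRealCM (c • f) = (c : ℝ) • toRealCM f := by
      ext x; simp [toRealCM, NNReal.smul_def]
    rw [h1, L.map_smul, smul_eq_mul, Real.toNNReal_mul c.coe_nonneg, Real.toNNReal_coe]
    rfl

variable (hpos : ∀ f : C(T, ℝ), (∀ x, 0 ≤ f x) → 0 ≤ L f)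

/-- the Riesz content associated to `L` -/
noncomputable def content : Content T where
  toFun := rieszContentAux (lam L hpos)
  mono' _ _ h := rieszContentAux_mono _ h
  sup_le' := rieszContentAux_sup_le _
  sup_disjoint' K₁ K₂ hd _ _ := by
    refine le_antisymm (rieszContentAux_sup_le _ _ _) ?_
    refine le_csInf (rieszContentAux_image_nonempty _ _) ?_
    rintro b ⟨f, hf, rfl⟩
    obtain ⟨k, hk0, hk1, hk01⟩ :=
      exists_continuous_zero_one_of_isClosed K₂.isCompact.isClosed K₁.isCompact.isClosed hd.symm
    set h₁ : CompactlySupportedContinuousMap T ℝ≥0 :=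
      mkC ⟨fun x => f x * Real.toNNReal (k x),
        (map_continuous f).mul (continuous_real_toNNReal.comp (map_continuous k))⟩ with hh₁
    set h₂ : CompactlySupportedContinuousMap T ℝ≥0 :=
      mkC ⟨fun x => f x * Real.toNNReal (1 - k x),
        (map_continuous f).mul (continuous_real_toNNReal.comp
          (continuous_const.sub (map_continuous k)))⟩ with hh₂
    have hsum : h₁ + h₂ = f := by
      ext x
      have h01 := hk01 x
      have : Real.toNNReal (k x) + Real.toNNReal (1 - k x) = 1 := by
        rw [← Real.toNNReal_add h01.1 (by linarith [h01.2])]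
        norm_num
      have hgoal : (h₁ + h₂) x = f x := by
        simp only [hh₁, hh₂, CompactlySupportedContinuousMap.add_apply, mkC_apply, ContinuousMap.coe_mk]
        rw [← mul_add, this, mul_one]
      exact_mod_cast hgoal
    have h1K : ∀ x ∈ K₁, (1 : ℝ≥0) ≤ h₁ x := by
      intro x hx
      have : k x = 1 := hk1 hx
      simp only [hh₁, mkC_apply, ContinuousMap.coe_mk, this]
      simpa using hf x (Or.inl hx)
    have h2K : ∀ x ∈ K₂, (1 : ℝ≥0) ≤ h₂ x := by
      intro x hx
      have : k x = 0 := hk0 hx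
      simp only [hh₂, mkC_apply, ContinuousMap.coe_mk, this]
      simpa using hf x (Or.inr hx)
    calc rieszContentAux (lam L hpos) K₁ + rieszContentAux (lam L hpos) K₂
        ≤ lam L hpos h₁ + lam L hpos h₂ :=
          add_le_add (rieszContentAux_le _ h1K) (rieszContentAux_le _ h2K)
      _ = lam L hpos (h₁ + h₂) := (map_add _ _ _).symm
      _ = lam L hpos f := by rw [hsum]


section Meas
variable (hpos : ∀ f : C(T, ℝ), (∀ x, 0 ≤ f x) → 0 ≤ L f)
variable [MeasurableSpace T] [BorelSpace T]

/-- The measure representing `L`. -/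
noncomputable def rmk : Measure T := (content L hpos).measure

lemma content_spec : (content L hpos).toFun = rieszContentAux (lam L hpos) := rfl

lemma lam_spec (f : CompactlySupportedContinuousMap T ℝ≥0) : lam L hpos f = (L (toRealCM f)).toNNReal := rfl

lemma rmk_open {U : Set T} (hU : IsOpen U) :
    rmk L hpos U = (content L hpos).innerContent ⟨U, hU⟩ := by
  rw [rmk, Content.measure_apply _ hU.measurableSet, Content.outerMeasure_of_isOpen _ _ hU]

lemma lam_le_of_eqOn {g : C(T, ℝ)} {ε : ℝ} (hε : 0 < ε) (hg0 : ∀ x, 0 ≤ g x)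
    {A : Set T} (hgA : ∀ x ∈ A, g x = ε) {K : Compacts T} (hK : (K : Set T) ⊆ A) :
    (content L hpos).toFun K ≤ Real.toNNReal (ε⁻¹ * L g) := by
  rw [content_spec]
  have hcont : Continuous fun x => Real.toNNReal (ε⁻¹ * g x) :=
    continuous_real_toNNReal.comp (continuous_const.mul (map_continuous g))
  set h : CompactlySupportedContinuousMap T ℝ≥0 := mkC ⟨fun x => Real.toNNReal (ε⁻¹ * g x), hcont⟩ with hh
  have h1 : ∀ x ∈ K, (1 : ℝ≥0) ≤ h x := by
    intro x hx
    have : g x = ε := hgA x (hK hx)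
    simp [hh, this, inv_mul_cancel₀ hε.ne']
  refine le_trans (rieszContentAux_le _ h1) (le_of_eq ?_)
  have : toRealCM h = ε⁻¹ • g := by
    ext x
    simp only [hh, toRealCM, mkC_apply, ContinuousMap.coe_mk, ContinuousMap.smul_apply,
      smul_eq_mul]
    exact Real.coe_toNNReal _ (mul_nonneg (inv_nonneg.mpr hε.le) (hg0 x))
  rw [lam_spec, this, L.map_smul, smul_eq_mul]

/-- key lower bound : `ε · μ A ≤ L g` for `0 ≤ g ≤ ε`, `g = ε` on open `A`. -/
lemma mul_measure_le {g : C(T, ℝ)} {ε : ℝ} (hε : 0 < ε) (hg0 : ∀ x, 0 ≤ g x)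
    {A : Set T} (hA : IsOpen A) (hgA : ∀ x ∈ A, g x = ε) :
    ε * (rmk L hpos A).toReal ≤ L g := by
  have hLg : 0 ≤ L g := hpos g hg0
  have h1 : rmk L hpos A ≤ (Real.toNNReal (ε⁻¹ * L g) : ℝ≥0∞) := by
    rw [rmk_open L hpos hA]
    exact iSup₂_le fun K hK => ENNReal.coe_le_coe.mpr (lam_le_of_eqOn L hpos hε hg0 hgA hK)
  have h2 : (rmk L hpos A).toReal ≤ ε⁻¹ * L g := by
    refine le_trans (ENNReal.toReal_mono ENNReal.coe_ne_top h1) ?_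
    rw [ENNReal.coe_toReal, Real.coe_toNNReal _ (mul_nonneg (inv_nonneg.mpr hε.le) hLg)]
  calc ε * (rmk L hpos A).toReal ≤ ε * (ε⁻¹ * L g) :=
        mul_le_mul_of_nonneg_left h2 hε.le
    _ = L g := by field_simp

variable (hone : L 1 = 1)

include hone in
lemma rmk_univ : rmk L hpos Set.univ = 1 := by
  rw [rmk_open L hpos isOpen_univ]
  refine le_antisymm (iSup₂_le fun K _ => ?_) ?_
  · have : (content L hpos).toFun K ≤ 1 := by
      rw [content_spec]
      refine le_trans (rieszContentAux_le (Λ := lam L hpos) (K := K) (f := mkC 1)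
        (fun x _ => le_of_eq rfl)) (le_of_eq ?_)
      have h1 : toRealCM (mkC 1 : CompactlySupportedContinuousMap T ℝ≥0) = 1 := by ext x; simp [toRealCM]
      rw [lam_spec, h1, hone]; simp
    exact le_trans (ENNReal.coe_le_coe.mpr this) (by norm_num)
  · have h1 : (1 : ℝ≥0) ≤ (content L hpos).toFun ⟨Set.univ, isCompact_univ⟩ := by
      rw [content_spec]
      refine le_csInf (rieszContentAux_image_nonempty _ _) ?_
      rintro b ⟨f, hf, rfl⟩
      have hge : ∀ x, (1 : C(T, ℝ)) x ≤ toRealCM f x := by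
        intro x
        have := hf x (mem_univ x)
        simpa [toRealCM] using this
      have h2 : (1 : ℝ) ≤ L (toRealCM f) := by
        have hm : L 1 ≤ L (toRealCM f) := L_mono L hpos hge
        rwa [hone] at hm
      rw [lam_spec]
      exact le_trans (by norm_num) (Real.toNNReal_mono h2)
    calc (1 : ℝ≥0∞) ≤ ((content L hpos).toFun ⟨Set.univ, isCompact_univ⟩ : ℝ≥0∞) := by
          exact_mod_cast h1
      _ ≤ _ := (content L hpos).le_innerContent _ _ (subset_refl _)

include hone in
lemma rmk_prob : IsProbabilityMeasure (rmk L hpos) := ⟨rmk_univ L hpos hone⟩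

include hone in
lemma integral_le_L (f : C(T, ℝ)) (hf0 : ∀ x, 0 ≤ f x) :
    ∫ x, f x ∂(rmk L hpos) ≤ L f := by
  haveI := rmk_prob L hpos hone
  refine le_of_forall_pos_le_add fun ε hε => ?_
  set μ := rmk L hpos with hμ
  obtain ⟨n, hn⟩ : ∃ n : ℕ, ∀ x, f x ≤ n * ε := by
    refine ⟨⌈‖f‖ / ε⌉₊, fun x => ?_⟩
    have h1 : f x ≤ ‖f‖ := (le_abs_self _).trans (f.norm_coe_le_norm x)
    have h2 : ‖f‖ / ε ≤ (⌈‖f‖ / ε⌉₊ : ℝ) := Nat.le_ceil _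
    calc f x ≤ ‖f‖ := h1
      _ ≤ (⌈‖f‖ / ε⌉₊ : ℝ) * ε := by rw [← div_le_iff₀ hε] at *; exact h2
  set g : ℕ → C(T, ℝ) := fun j =>
    ⟨fun x => min (max (f x - j * ε) 0) ε, by continuity⟩ with hg
  have hdecomp : f = ∑ j ∈ Finset.range n, g j := by
    ext x
    rw [ContinuousMap.coe_sum, Finset.sum_apply]
    exact (telescope hε n (f x) (hf0 x) (hn x)).symm
  have hLf : L f = ∑ j ∈ Finset.range n, L (g j) := by
    conv_lhs => rw [hdecomp]
    rw [map_sum]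
  have hlow : ∀ j ∈ Finset.range n,
      ε * (μ {x | ((j : ℝ) + 1) * ε < f x}).toReal ≤ L (g j) := by
    intro j _
    refine mul_measure_le L hpos hε (fun x => le_min (le_max_right _ _) hε.le)
      (isOpen_lt continuous_const (map_continuous f)) ?_
    intro x hx
    have hx' : ((j : ℝ) + 1) * ε < f x := hx
    show min (max (f x - j * ε) 0) ε = ε
    rw [max_eq_left (by nlinarith), min_eq_right (by nlinarith)]
  have hstep := slice_integral_le μ f (map_continuous f).measurable hε n hf0 hn
  have huniv : (μ Set.univ).toReal = 1 := by simp [measure_univ]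
  have hsum2 : ∑ j ∈ Finset.Icc 1 (n - 1), ε * (μ {x | (j : ℝ) * ε < f x}).toReal ≤
      ∑ j ∈ Finset.range n, ε * (μ {x | ((j : ℝ) + 1) * ε < f x}).toReal := by
    have himg : Finset.Icc 1 n = Finset.image (fun j => j + 1) (Finset.range n) := by
      ext j
      simp only [Finset.mem_Icc, Finset.mem_image, Finset.mem_range]
      constructor
      · rintro ⟨h1, h2⟩; exact ⟨j - 1, by omega, by omega⟩
      · rintro ⟨a, ha, rfl⟩; omega
    have h1 : ∑ j ∈ Finset.Icc 1 (n - 1), ε * (μ {x | (j : ℝ) * ε < f x}).toReal ≤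
        ∑ j ∈ Finset.Icc 1 n, ε * (μ {x | (j : ℝ) * ε < f x}).toReal := by
      refine Finset.sum_le_sum_of_subset_of_nonneg
        (Finset.Icc_subset_Icc_right (by omega)) fun j _ _ => ?_
      exact mul_nonneg hε.le ENNReal.toReal_nonneg
    refine h1.trans (le_of_eq ?_)
    rw [himg, Finset.sum_image (fun a _ b _ h => by omega)]
    refine Finset.sum_congr rfl fun j _ => ?_
    push_cast
    ring_nf
  calc ∫ x, f x ∂μ ≤ ε * (μ Set.univ).toReal +
        ∑ j ∈ Finset.Icc 1 (n - 1), ε * (μ {x | (j : ℝ) * ε < f x}).toReal := hstep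
    _ ≤ ε + ∑ j ∈ Finset.range n, ε * (μ {x | ((j : ℝ) + 1) * ε < f x}).toReal := by
        rw [huniv, mul_one]; exact add_le_add_right hsum2 _
    _ ≤ ε + ∑ j ∈ Finset.range n, L (g j) := by
        exact add_le_add_right (Finset.sum_le_sum hlow) _
    _ = L f + ε := by rw [← hLf]; ring

include hone in
lemma cm_integrable (g : C(T, ℝ)) : Integrable (⇑g) (rmk L hpos) := by
  haveI := rmk_prob L hpos hone
  exact integrableOn_univ.mp
    (((map_continuous g).continuousOn).integrableOn_compact isCompact_univ)

include hone in
lemma integral_eq_L (f : C(T, ℝ)) : ∫ x, f x ∂(rmk L hpos) = L f := by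
  haveI := rmk_prob L hpos hone
  set μ := rmk L hpos with hμ
  have key : ∀ g : C(T, ℝ), ∫ x, g x ∂μ ≤ L g := by
    intro g
    set c := ‖g‖ with hc
    have h0 : ∀ x, 0 ≤ (g + ContinuousMap.const T c) x := by
      intro x
      have := (neg_abs_le (g x)).trans' (neg_le_neg (g.norm_coe_le_norm x))
      simp only [ContinuousMap.add_apply, ContinuousMap.const_apply]
      have h2 : |g x| ≤ c := g.norm_coe_le_norm x
      have := abs_le.mp h2
      linarith [this.1]
    have hint := integral_le_L L hpos hone (g + ContinuousMap.const T c) h0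
    have hLc : L (ContinuousMap.const T c) = c := by
      have h1 : ContinuousMap.const T c = c • (1 : C(T, ℝ)) := by ext; simp
      rw [h1, L.map_smul, hone, smul_eq_mul, mul_one]
    have hI : ∫ x, (g + ContinuousMap.const T c) x ∂μ = (∫ x, g x ∂μ) + c := by
      have : ∀ x, (g + ContinuousMap.const T c) x = g x + c := fun x => rfl
      rw [integral_congr_ae (Filter.Eventually.of_forall this),
        integral_add (cm_integrable L hpos hone g) (integrable_const c), integral_const]
      simp [measure_univ]
      rfl
    rw [hI, map_add, hLc] at hint
    linarith
  refine le_antisymm (key f) ?_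
  have h1 := key (-f)
  have h2 : ∫ x, (-f) x ∂μ = -∫ x, f x ∂μ := by
    have : ∀ x, (-f) x = -(f x) := fun x => rfl
    rw [integral_congr_ae (Filter.Eventually.of_forall this), integral_neg]
  rw [h2, map_neg] at h1
  linarith

include hone in
lemma rmk_open_approx {U : Set T} (hU : IsOpen U) {δ : ℝ} (hδ : 0 < δ) :
    ∃ h : C(T, ℝ), (∀ x, 0 ≤ h x) ∧ (∀ x, h x ≤ 1) ∧ (∀ x, x ∉ U → h x = 0) ∧
      ((rmk L hpos) U).toReal ≤ (∫ x, h x ∂(rmk L hpos)) + δ := by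
  haveI := rmk_prob L hpos hone
  set μ := rmk L hpos with hμ
  have hfin : (content L hpos).innerContent ⟨U, hU⟩ ≠ ⊤ := by
    rw [← rmk_open L hpos hU]; exact measure_ne_top μ U
  have hδ' : (Real.toNNReal (δ / 2)) ≠ 0 := by
    simp only [ne_eq, Real.toNNReal_eq_zero, not_le]; linarith
  obtain ⟨K, hKU, hK⟩ := (content L hpos).innerContent_exists_compact hfin hδ'
  have hdisj : Disjoint Uᶜ (K : Set T) := disjoint_left.mpr fun x hxc hxK => hxc (hKU hxK)
  obtain ⟨h, hh0, hh1, hh01⟩ := exists_continuous_zero_one_of_isClosed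
    hU.isClosed_compl K.isCompact.isClosed hdisj
  refine ⟨h, fun x => (hh01 x).1, fun x => (hh01 x).2, fun x hx => hh0 hx, ?_⟩
  have hKm : (μ (K : Set T)).toReal ≤ ∫ x, h x ∂μ := by
    have hind : ∀ x, (K : Set T).indicator (fun _ => (1 : ℝ)) x ≤ h x := by
      intro x
      by_cases hx : x ∈ (K : Set T)
      · rw [Set.indicator_of_mem hx]; exact le_of_eq (hh1 hx).symm
      · rw [Set.indicator_of_notMem hx]; exact (hh01 x).1
    have hKmeas : MeasurableSet (K : Set T) := K.isCompact.isClosed.measurableSet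
    calc (μ (K : Set T)).toReal = ∫ x, (K : Set T).indicator (fun _ => (1 : ℝ)) x ∂μ := by
          rw [integral_indicator_const _ hKmeas]; simp [Measure.real]
      _ ≤ ∫ x, h x ∂μ := integral_mono ((integrable_const (1:ℝ)).indicator hKmeas)
          (cm_integrable L hpos hone h) hind
  have h2 : ((content L hpos).toFun K : ℝ≥0∞) ≤ μ (K : Set T) := by
    rw [hμ, rmk, Content.measure_apply _ K.isCompact.isClosed.measurableSet]
    exact (content L hpos).le_outerMeasure_compacts K
  have h3 : (μ U).toReal ≤ ((content L hpos).toFun K : ℝ≥0∞).toReal + δ / 2 := by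
    have h4 : μ U ≤ ((content L hpos).toFun K : ℝ≥0∞) + Real.toNNReal (δ / 2) := by
      rw [rmk_open L hpos hU]; exact hK
    have h5 := ENNReal.toReal_mono (by finiteness) h4
    rw [ENNReal.toReal_add (by finiteness) (by finiteness)] at h5
    refine h5.trans ?_
    simp only [ENNReal.coe_toReal, Real.coe_toNNReal _ (by linarith : (0:ℝ) ≤ δ / 2)]
    exact le_rfl
  have h6 : ((content L hpos).toFun K : ℝ≥0∞).toReal ≤ (μ (K : Set T)).toReal :=
    ENNReal.toReal_mono (measure_ne_top μ _) h2
  linarith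

include hpos hone in
lemma rmk_package :
    ∃ μ : Measure T, IsProbabilityMeasure μ ∧ (∀ f : C(T, ℝ), ∫ x, f x ∂μ = L f) ∧
      (∀ U : Set T, IsOpen U → ∀ δ : ℝ, 0 < δ → ∃ h : C(T, ℝ),
        (∀ x, 0 ≤ h x) ∧ (∀ x, h x ≤ 1) ∧ (∀ x, x ∉ U → h x = 0) ∧
        (μ U).toReal ≤ (∫ x, h x ∂μ) + δ) :=
  ⟨rmk L hpos, rmk_prob L hpos hone, integral_eq_L L hpos hone,
    fun _ hU _ hδ => rmk_open_approx L hpos hone hU hδ⟩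

end Meas
end CE

namespace CE2

lemma exists_functional {M : Type*} [TopologicalSpace M] [CompactSpace M]
    (E : Set (M → ℝ))
    (hcont : ∀ f ∈ E, Continuous f)
    (hadd : ∀ f ∈ E, ∀ g ∈ E, f + g ∈ E)
    (hsmul : ∀ f ∈ E, ∀ t : ℝ, 0 ≤ t → t • f ∈ E)
    (hconst : ∀ c : ℝ, (fun _ : M => c) ∈ E)
    (X : Set M) (hXne : X.Nonempty) (hX : IsCompact X)
    (hmax : ∀ f ∈ E, ∃ x ∈ X, ∀ y : M, f y ≤ f x)
    (u : M → ℝ) (C : ℝ) (hC : ∀ x ∈ X, -C ≤ u x) (z : M) (SU : ℝ)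
    (hSU1 : ∀ v ∈ E, (∀ x ∈ X, v x ≤ u x) → v z ≤ SU) :
    ∃ L : C(↥X, ℝ) →ₗ[ℝ] ℝ,
      (∀ f : C(↥X, ℝ), (∀ x, 0 ≤ f x) → 0 ≤ L f) ∧ (L 1 = 1) ∧
      (∀ v, ∀ hv : v ∈ E,
        v z ≤ L ⟨fun x => v x.1, (hcont v hv).comp continuous_subtype_val⟩) ∧
      (∀ g : C(↥X, ℝ), (∀ x : ↥X, g x ≤ u x.1) → L g ≤ SU) := by
  haveI : Nonempty ↥X := hXne.to_subtype
  haveI : CompactSpace ↥X := isCompact_iff_compactSpace.mp hX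
  have maxprin : ∀ v ∈ E, ∀ c : ℝ, (∀ x ∈ X, v x ≤ c) → v z ≤ c := by
    intro v hv c hvc
    obtain ⟨x1, hx1X, hx1⟩ := hmax v hv
    exact (hx1 z).trans (hvc x1 hx1X)
  -- the sublinear functional
  set R : C(↥X, ℝ) → (M → ℝ) → ℝ → (Set ℝ) :=
    fun f v t => Set.range fun x : ↥X => f x + v x.1 - t * u x.1 with hR
  set Φ : C(↥X, ℝ) → (M → ℝ) → ℝ → ℝ :=
    fun f v t => t * SU - v z + sSup (R f v t) with hΦ
  set S : C(↥X, ℝ) → Set ℝ :=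
    fun f => {c | ∃ v, v ∈ E ∧ ∃ t : ℝ, 0 ≤ t ∧ c = Φ f v t} with hS
  set P : C(↥X, ℝ) → ℝ := fun f => sInf (S f) with hP
  have hRne : ∀ f v t, (R f v t).Nonempty := fun f v t => Set.range_nonempty _
  have hRbdd : ∀ (f : C(↥X, ℝ)) v (hv : v ∈ E) (t : ℝ), 0 ≤ t → BddAbove (R f v t) := by
    intro f v hv t ht
    obtain ⟨xv, _, hxv⟩ := hmax v hv
    refine ⟨‖f‖ + v xv + t * C, ?_⟩
    rintro c ⟨x, rfl⟩
    have h1 : f x ≤ ‖f‖ := (le_abs_self _).trans (f.norm_coe_le_norm x)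
    have h2 : v x.1 ≤ v xv := hxv x.1
    have h3 : -C ≤ u x.1 := hC x.1 x.2
    have h4 : -(t * u x.1) ≤ t * C := by nlinarith
    simp only
    linarith
  have hSmem : ∀ (f : C(↥X, ℝ)) v (hv : v ∈ E) (t : ℝ) (ht : 0 ≤ t), Φ f v t ∈ S f :=
    fun f v hv t ht => ⟨v, hv, t, ht, rfl⟩
  have hSne : ∀ f : C(↥X, ℝ), (S f).Nonempty := by
    intro f
    exact ⟨Φ f (fun _ => 0) 0, hSmem f _ (hconst 0) 0 le_rfl⟩
  -- lower bound for elements of S f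
  have hSlb : ∀ (f : C(↥X, ℝ)) (m : ℝ), (∀ x, m ≤ f x) → ∀ c ∈ S f, m ≤ c := by
    rintro f m hm c ⟨v, hv, t, ht, rfl⟩
    set s := sSup (R f v t) with hs
    have hle : ∀ x : ↥X, v x.1 + m - s ≤ t * u x.1 := by
      intro x
      have h1 : f x + v x.1 - t * u x.1 ≤ s := le_csSup (hRbdd f v hv t ht) ⟨x, rfl⟩
      have h2 := hm x
      linarith
    rcases eq_or_lt_of_le ht with rfl | htpos
    · -- t = 0
      have hvE : (v + fun _ => m - s) ∈ E := hadd v hv _ (hconst (m - s))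
      have hvz : v z + (m - s) ≤ 0 := by
        have := maxprin _ hvE 0 fun x hx => by
          have := hle ⟨x, hx⟩
          simp only [Pi.add_apply]
          linarith [this]
        simpa using this
      simp only [hΦ, zero_mul, zero_add]
      linarith
    · -- t > 0
      set w := t⁻¹ • (v + fun _ => m - s) with hw
      have hwE : w ∈ E := hsmul _ (hadd v hv _ (hconst (m - s))) _ (inv_nonneg.mpr htpos.le)
      have hwu : ∀ x ∈ X, w x ≤ u x := by
        intro x hx
        have h1 := hle ⟨x, hx⟩
        simp only [hw, Pi.smul_apply, Pi.add_apply, smul_eq_mul]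
        rw [inv_mul_le_iff₀ htpos]
        linarith [h1]
      have hwz : w z ≤ SU := hSU1 w hwE hwu
      have hwz' : t * w z = v z + (m - s) := by
        simp only [hw, Pi.smul_apply, Pi.add_apply, smul_eq_mul]
        field_simp
      have := mul_le_mul_of_nonneg_left hwz ht
      rw [hwz'] at this
      simp only [hΦ]
      linarith
  have hSbdd : ∀ f : C(↥X, ℝ), BddBelow (S f) := by
    intro f
    exact ⟨-‖f‖, fun c hc => hSlb f (-‖f‖)
      (fun x => (neg_le_of_abs_le (f.norm_coe_le_norm x) : -‖f‖ ≤ f x)) c hc⟩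
  have hPle : ∀ (f : C(↥X, ℝ)) v (hv : v ∈ E) (t : ℝ) (ht : 0 ≤ t), P f ≤ Φ f v t :=
    fun f v hv t ht => csInf_le (hSbdd f) (hSmem f v hv t ht)
  -- subadditivity
  have hPadd : ∀ f g : C(↥X, ℝ), P (f + g) ≤ P f + P g := by
    intro f g
    have hcore : ∀ c1 ∈ S f, ∀ c2 ∈ S g, P (f + g) ≤ c1 + c2 := by
      rintro c1 ⟨v1, hv1, t1, ht1, rfl⟩ c2 ⟨v2, hv2, t2, ht2, rfl⟩
      have hmem := hPle (f + g) (v1 + v2) (hadd v1 hv1 v2 hv2) (t1 + t2) (by linarith)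
      have hsup : sSup (R (f + g) (v1 + v2) (t1 + t2)) ≤
          sSup (R f v1 t1) + sSup (R g v2 t2) := by
        refine csSup_le (hRne _ _ _) ?_
        rintro c ⟨x, rfl⟩
        have h1 : f x + v1 x.1 - t1 * u x.1 ≤ sSup (R f v1 t1) :=
          le_csSup (hRbdd f v1 hv1 t1 ht1) ⟨x, rfl⟩
        have h2 : g x + v2 x.1 - t2 * u x.1 ≤ sSup (R g v2 t2) :=
          le_csSup (hRbdd g v2 hv2 t2 ht2) ⟨x, rfl⟩
        simp only [ContinuousMap.add_apply, Pi.add_apply]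
        ring_nf
        ring_nf at h1 h2
        linarith
      refine hmem.trans ?_
      simp only [hΦ, Pi.add_apply]
      ring_nf
      ring_nf at hsup
      linarith
    have h1 : ∀ c2 ∈ S g, P (f + g) - c2 ≤ P f := by
      intro c2 hc2
      refine le_csInf (hSne f) fun c1 hc1 => ?_
      linarith [hcore c1 hc1 c2 hc2]
    have h2 : P (f + g) - P f ≤ P g := by
      refine le_csInf (hSne g) fun c2 hc2 => ?_
      linarith [h1 c2 hc2]
    linarith
  -- homogeneity
  have hPsmul_le : ∀ c : ℝ, 0 < c → ∀ f : C(↥X, ℝ), P (c • f) ≤ c * P f := by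
    intro c hc f
    have hcore : ∀ b ∈ S f, P (c • f) ≤ c * b := by
      rintro b ⟨v, hv, t, ht, rfl⟩
      have hmem := hPle (c • f) (c • v) (hsmul v hv c hc.le) (c * t)
        (mul_nonneg hc.le ht)
      have hsup : sSup (R (c • f) (c • v) (c * t)) ≤ c * sSup (R f v t) := by
        refine csSup_le (hRne _ _ _) ?_
        rintro d ⟨x, rfl⟩
        have h1 : f x + v x.1 - t * u x.1 ≤ sSup (R f v t) :=
          le_csSup (hRbdd f v hv t ht) ⟨x, rfl⟩
        simp only [ContinuousMap.smul_apply, Pi.smul_apply, smul_eq_mul]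
        nlinarith
      refine hmem.trans ?_
      simp only [hΦ, Pi.smul_apply, smul_eq_mul]
      nlinarith
    have h1 : c⁻¹ * P (c • f) ≤ P f := by
      refine le_csInf (hSne f) fun b hb => ?_
      rw [inv_mul_le_iff₀ hc]
      exact hcore b hb
    calc P (c • f) = c * (c⁻¹ * P (c • f)) := by field_simp
      _ ≤ c * P f := mul_le_mul_of_nonneg_left h1 hc.le
  have hPsmul : ∀ c : ℝ, 0 < c → ∀ f : C(↥X, ℝ), P (c • f) = c * P f := by
    intro c hc f
    refine le_antisymm (hPsmul_le c hc f) ?_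
    have h1 := hPsmul_le c⁻¹ (inv_pos.mpr hc) (c • f)
    rw [smul_smul, inv_mul_cancel₀ hc.ne', one_smul] at h1
    have h2 := mul_le_mul_of_nonneg_left h1 hc.le
    rw [← mul_assoc, mul_inv_cancel₀ hc.ne', one_mul] at h2
    linarith
  -- Hahn-Banach
  have hP0 : 0 ≤ P 0 :=
    le_csInf (hSne 0) fun c hc => hSlb 0 0 (fun x => le_rfl) c hc
  have hdom : ∀ x : (⟨⊥, 0⟩ : C(↥X, ℝ) →ₗ.[ℝ] ℝ).domain,
      (⟨⊥, 0⟩ : C(↥X, ℝ) →ₗ.[ℝ] ℝ) x ≤ P x := by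
    rintro ⟨x, hx⟩
    rw [Submodule.mem_bot] at hx
    subst hx
    simpa using hP0
  obtain ⟨L, -, hLP⟩ := exists_extension_of_le_sublinear
    (⟨⊥, 0⟩ : C(↥X, ℝ) →ₗ.[ℝ] ℝ) P hPsmul hPadd hdom
  -- properties of L
  have hzeroE : (fun _ : M => (0:ℝ)) ∈ E := hconst 0
  have hLpos : ∀ f : C(↥X, ℝ), (∀ x, 0 ≤ f x) → 0 ≤ L f := by
    intro f hf
    have h1 := (hLP (-f)).trans (hPle (-f) (fun _ => 0) hzeroE 0 le_rfl)
    have h2 : sSup (R (-f) (fun _ => 0) 0) ≤ 0 := by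
      refine csSup_le (hRne (-f) (fun _ => 0) 0) ?_
      rintro c ⟨x, rfl⟩
      simp only [ContinuousMap.neg_apply]
      linarith [hf x]
    rw [map_neg] at h1
    simp only [hΦ] at h1
    linarith
  have hsSup_const : ∀ c : ℝ, sSup (Set.range fun _ : ↥X => c) = c := by
    intro c
    rw [Set.range_const, csSup_singleton]
  have hL1 : L 1 = 1 := by
    have h1 := (hLP 1).trans (hPle 1 (fun _ => 0) hzeroE 0 le_rfl)
    have h2 := (hLP (-1)).trans (hPle (-1) (fun _ => 0) hzeroE 0 le_rfl)
    have e1 : sSup (R 1 (fun _ => 0) 0) = 1 := by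
      have : (fun x : ↥X => (1 : C(↥X, ℝ)) x + (fun _ : M => (0:ℝ)) x.1 - 0 * u x.1) =
          fun _ : ↥X => (1:ℝ) := by funext x; simp
      rw [hR]; simp only []; rw [this, hsSup_const]
    have e2 : sSup (R (-1) (fun _ => 0) 0) = -1 := by
      have : (fun x : ↥X => (-1 : C(↥X, ℝ)) x + (fun _ : M => (0:ℝ)) x.1 - 0 * u x.1) =
          fun _ : ↥X => (-1:ℝ) := by
        funext x; simp
      rw [hR]; simp only []; rw [this, hsSup_const]
    simp only [hΦ, e1, e2] at h1 h2
    rw [map_neg] at h2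
    linarith
  have hLres : ∀ v, ∀ hv : v ∈ E,
      v z ≤ L ⟨fun x => v x.1, (hcont v hv).comp continuous_subtype_val⟩ := by
    intro v hv
    set rv : C(↥X, ℝ) := ⟨fun x => v x.1, (hcont v hv).comp continuous_subtype_val⟩ with hrv
    have h1 := (hLP (-rv)).trans (hPle (-rv) v hv 0 le_rfl)
    have e1 : sSup (R (-rv) v 0) = 0 := by
      have : (fun x : ↥X => (-rv) x + v x.1 - 0 * u x.1) = fun _ : ↥X => (0:ℝ) := by
        funext x; simp [hrv]
      rw [hR]; simp only []; rw [this, hsSup_const]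
    simp only [hΦ, e1] at h1
    rw [map_neg] at h1
    linarith
  have hLu : ∀ g : C(↥X, ℝ), (∀ x : ↥X, g x ≤ u x.1) → L g ≤ SU := by
    intro g hg
    have h1 := (hLP g).trans (hPle g (fun _ => 0) hzeroE 1 zero_le_one)
    have h2 : sSup (R g (fun _ => 0) 1) ≤ 0 := by
      refine csSup_le (hRne g (fun _ => 0) 1) ?_
      rintro c ⟨x, rfl⟩
      simp only
      linarith [hg x]
    simp only [hΦ] at h1
    linarith
  exact ⟨L, hLpos, hL1, hLres, hLu⟩

end CE2

namespace CE3
lemma lsc_restrict {M : Type*} [TopologicalSpace M] {X : Set M} {u : M → ℝ}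
    (hlsc : LowerSemicontinuousOn u X) :
    LowerSemicontinuous (fun y : X => u y.1) := by
  intro y c hc
  have h1 : ∀ᶠ x in nhdsWithin (y : M) X, c < u x := hlsc y.1 y.2 c hc
  have h2 : Filter.comap (Subtype.val : X → M) (nhdsWithin (y : M) X) =
      Filter.comap (Subtype.val : X → M) (nhds (y : M)) := by
    rw [nhdsWithin, Filter.comap_inf, Filter.comap_principal]
    have : (Subtype.val : X → M) ⁻¹' X = Set.univ := by
      ext x; simp [x.2]
    rw [this]
    simp
  have h3 : {x : X | c < u x.1} ∈ Filter.comap (Subtype.val : X → M) (nhdsWithin (y : M) X) :=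
    Filter.preimage_mem_comap h1
  rw [h2] at h3
  rw [nhds_subtype_eq_comap]
  exact h3
end CE3

open MeasureTheory

/-- **Choquet–Edwards theorem** (Theorem 3.3 of the paper).
`M` is a nonempty compact Hausdorff space, `E` a convex cone of continuous
functions containing constants and separating points, `X ⊆ M` a compact set on
which every function of `E` attains its maximum over `M`.  For a bounded lower
semicontinuous `u` on `X`, the upper envelope `û` is the infimum of the
integrals of `u` against Jensen measures supported on `X`. -/
theorem choquet_edwards
    {M : Type*} [TopologicalSpace M] [CompactSpace M] [T2Space M] [Nonempty M]
    [MeasurableSpace M] [BorelSpace M]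
    (E : Set (M → ℝ))
    (hcont : ∀ f ∈ E, Continuous f)
    (hadd : ∀ f ∈ E, ∀ g ∈ E, f + g ∈ E)
    (hsmul : ∀ f ∈ E, ∀ t : ℝ, 0 ≤ t → t • f ∈ E)
    (hconst : ∀ c : ℝ, (fun _ : M => c) ∈ E)
    (hsep : ∀ x y : M, x ≠ y → ∃ f ∈ E, f x ≠ f y)
    (X : Set M) (hX : IsCompact X)
    (hmax : ∀ f ∈ E, ∃ x ∈ X, ∀ y : M, f y ≤ f x)
    (u : M → ℝ)
    (hbd : ∃ C : ℝ, ∀ x ∈ X, |u x| ≤ C)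
    (hlsc : LowerSemicontinuousOn u X)
    (uhat : M → ℝ)
    (huhat : ∀ z : M,
      uhat z = sSup {t : ℝ | ∃ v ∈ E, (∀ x ∈ X, v x ≤ u x) ∧ t = v z}) :
    ∀ z : M,
      (∃ μ : Measure M, IsProbabilityMeasure μ ∧ μ Xᶜ = 0 ∧
          ∀ v ∈ E, v z ≤ ∫ x, v x ∂μ) ∧
      uhat z = sInf {t : ℝ | ∃ μ : Measure M,
        (IsProbabilityMeasure μ ∧ μ Xᶜ = 0 ∧ ∀ v ∈ E, v z ≤ ∫ x, v x ∂μ) ∧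
        t = ∫ x, u x ∂μ} := by
  obtain ⟨C, hC⟩ := hbd
  obtain ⟨x₀, hx₀, -⟩ := hmax _ (hconst 0)
  have hXne : X.Nonempty := ⟨x₀, hx₀⟩
  haveI : Nonempty ↥X := hXne.to_subtype
  haveI : CompactSpace ↥X := isCompact_iff_compactSpace.mp hX
  have hXm : MeasurableSet X := hX.isClosed.measurableSet
  have hC0 : 0 ≤ C := (abs_nonneg _).trans (hC x₀ hx₀)
  have maxprin : ∀ v ∈ E, ∀ c : ℝ, (∀ x ∈ X, v x ≤ c) → ∀ y, v y ≤ c := by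
    intro v hv c hvc y
    obtain ⟨x1, hx1X, hx1⟩ := hmax v hv
    exact (hx1 y).trans (hvc x1 hx1X)
  -- measurable extension of u
  have hlscT := CE3.lsc_restrict hlsc
  have huTm : Measurable (fun y : ↥X => u y.1) := hlscT.measurable
  set w : M → ℝ :=
    Function.extend (Subtype.val : ↥X → M) (fun y : ↥X => u y.1) (fun _ => 0) with hw
  have hwm : Measurable w :=
    (MeasurableEmbedding.subtype_coe hXm).measurable_extend huTm measurable_const
  have hwX : ∀ x : M, ∀ hx : x ∈ X, w x = u x := by
    intro x hx
    have h1 := Subtype.val_injective.extend_apply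
      (fun y : ↥X => u y.1) (fun _ => (0:ℝ)) (⟨x, hx⟩ : ↥X)
    simpa [hw] using h1
  have hwb : ∀ x, |w x| ≤ C := by
    intro x
    by_cases hx : x ∈ X
    · rw [hwX x hx]; exact hC x hx
    · have h0 : w x = 0 := by
        rw [hw]
        refine Function.extend_apply' _ _ _ ?_
        rintro ⟨a, rfl⟩
        exact hx a.2
      rw [h0]; simpa using hC0
  intro z
  -- the admissible set
  have hAne : (-C) ∈ {t : ℝ | ∃ v ∈ E, (∀ x ∈ X, v x ≤ u x) ∧ t = v z} :=
    ⟨fun _ => -C, hconst _, fun x hx => (abs_le.mp (hC x hx)).1, rfl⟩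
  have hAub : ∀ t ∈ {t : ℝ | ∃ v ∈ E, (∀ x ∈ X, v x ≤ u x) ∧ t = v z}, t ≤ C := by
    rintro t ⟨v, hv, hvu, rfl⟩
    exact maxprin v hv C (fun x hx => (hvu x hx).trans ((le_abs_self _).trans (hC x hx))) z
  have hSU1 : ∀ v ∈ E, (∀ x ∈ X, v x ≤ u x) → v z ≤ uhat z := by
    intro v hv hvu
    rw [huhat z]
    exact le_csSup ⟨C, hAub⟩ ⟨v, hv, hvu, rfl⟩
  -- the functional and the measure
  obtain ⟨L, hLpos, hL1, hLres, hLu⟩ := CE2.exists_functional E hcont hadd hsmul hconst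
    X hXne hX hmax u C (fun x hx => (abs_le.mp (hC x hx)).1) z (uhat z) hSU1
  obtain ⟨μT, hμTprob, hμTint, hμTreg⟩ := CE.rmk_package L hLpos hL1
  haveI := hμTprob
  set μM := Measure.map (Subtype.val : ↥X → M) μT with hμM
  haveI hμMprob : IsProbabilityMeasure μM :=
    Measure.isProbabilityMeasure_map measurable_subtype_coe.aemeasurable
  have hμMXc : μM Xᶜ = 0 := by
    rw [hμM, Measure.map_apply measurable_subtype_coe hXm.compl]
    have h1 : (Subtype.val : ↥X → M) ⁻¹' Xᶜ = ∅ := by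
      ext y; simp [y.2]
    rw [h1]
    exact measure_empty
  have hjensen : ∀ v ∈ E, v z ≤ ∫ x, v x ∂μM := by
    intro v hv
    rw [hμM, integral_map measurable_subtype_coe.aemeasurable
      (hcont v hv).aestronglyMeasurable]
    have h2 : ∫ y : ↥X, v y.1 ∂μT =
        L ⟨fun x => v x.1, (hcont v hv).comp continuous_subtype_val⟩ :=
      hμTint ⟨fun x => v x.1, (hcont v hv).comp continuous_subtype_val⟩
    rw [h2]
    exact hLres v hv
  -- easy direction
  have hintCont : ∀ (μ : Measure M), IsFiniteMeasure μ → ∀ v : M → ℝ, Continuous v →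
      Integrable v μ := by
    intro μ hfin v hv
    haveI := hfin
    exact integrableOn_univ.mp ((hv.continuousOn).integrableOn_compact isCompact_univ)
  have hwint : ∀ (μ : Measure M), IsProbabilityMeasure μ → Integrable w μ := by
    intro μ hp
    haveI := hp
    exact (integrable_const C).mono' hwm.aestronglyMeasurable
      (Filter.Eventually.of_forall fun x => by rw [Real.norm_eq_abs]; exact hwb x)
  have hwae : ∀ μ : Measure M, μ Xᶜ = 0 → u =ᵐ[μ] w := by
    intro μ h0
    exact Filter.eventuallyEq_of_mem (mem_ae_iff.mpr h0) (fun x hx => (hwX x hx).symm)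
  have hEasy : ∀ μ : Measure M, IsProbabilityMeasure μ → μ Xᶜ = 0 →
      (∀ v ∈ E, v z ≤ ∫ x, v x ∂μ) → uhat z ≤ ∫ x, u x ∂μ := by
    intro μ hp h0 hj
    haveI := hp
    rw [huhat z]
    refine csSup_le ⟨-C, hAne⟩ ?_
    rintro t ⟨v, hv, hvu, rfl⟩
    have h1 : v z ≤ ∫ x, v x ∂μ := hj v hv
    have h2 : ∫ x, v x ∂μ ≤ ∫ x, w x ∂μ := by
      refine integral_mono_ae (hintCont μ inferInstance v (hcont v hv))
        (hwint μ hp) ?_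
      refine Filter.eventually_of_mem (mem_ae_iff.mpr h0) fun x hx => ?_
      rw [hwX x hx]
      exact hvu x hx
    have h3 : ∫ x, w x ∂μ = ∫ x, u x ∂μ := integral_congr_ae (hwae μ h0).symm
    linarith
  -- hard direction : ∫ u dμM ≤ uhat z
  have hKey : ∫ x, u x ∂μM ≤ uhat z := by
    have htrans : ∫ x, u x ∂μM = ∫ y : ↥X, u y.1 ∂μT := by
      rw [integral_congr_ae (hwae μM hμMXc), hμM,
        integral_map measurable_subtype_coe.aemeasurable hwm.aestronglyMeasurable]
      exact integral_congr_ae (Filter.Eventually.of_forall fun y => hwX y.1 y.2)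
    rw [htrans]
    have huTint : Integrable (fun y : ↥X => u y.1) μT :=
      (integrable_const C).mono' huTm.aestronglyMeasurable
        (Filter.Eventually.of_forall fun y => by rw [Real.norm_eq_abs]; exact hC y.1 y.2)
    refine le_of_forall_pos_le_add fun ε' hε' => ?_
    set ε := ε' / 2 with hε
    have hεpos : 0 < ε := by rw [hε]; linarith
    set n : ℕ := ⌈(2 * C) / ε⌉₊ + 1 with hn
    have hnpos : 0 < (n : ℝ) := by rw [hn]; positivity
    set δ := ε' / (2 * (n * ε + 1)) with hδ
    have hδpos : 0 < δ := by
      rw [hδ]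
      have h1 : (0:ℝ) < n * ε + 1 := by positivity
      positivity
    set φ : ↥X → ℝ := fun y => u y.1 + C with hφ
    have hφ0 : ∀ y, 0 ≤ φ y := by
      intro y
      have := (abs_le.mp (hC y.1 y.2)).1
      rw [hφ]; simp only []; linarith
    have hφn : ∀ y, φ y ≤ n * ε := by
      intro y
      have h1 : u y.1 ≤ C := (abs_le.mp (hC y.1 y.2)).2
      have h2 : (2*C)/ε ≤ (⌈(2*C)/ε⌉₊ : ℝ) := Nat.le_ceil _
      have h3 : 2 * C ≤ (⌈(2*C)/ε⌉₊:ℝ) * ε := by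
        rw [div_le_iff₀ hεpos] at h2; linarith
      have h4 : (n:ℝ) * ε = (⌈(2*C)/ε⌉₊:ℝ) * ε + ε := by
        rw [hn]; push_cast; ring
      rw [hφ]; simp only []
      rw [h4]
      linarith
    have hφm : Measurable φ := huTm.add_const C
    have hslice := CE.slice_integral_le μT φ hφm hεpos n hφ0 hφn
    set Aset : ℕ → Set ↥X := fun j => {y | (j:ℝ) * ε < φ y} with hAset
    have hAopen : ∀ j, IsOpen (Aset j) := by
      intro j
      have h1 : Aset j = (fun y : ↥X => u y.1) ⁻¹' (Set.Ioi ((j:ℝ) * ε - C)) := by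
        ext y
        simp only [hAset, hφ, Set.mem_setOf_eq, Set.mem_preimage, Set.mem_Ioi]
        constructor <;> intro <;> linarith
      rw [h1]
      exact hlscT.isOpen_preimage _
    choose h hh0 hh1 hhoff hhμ using fun j : ℕ => hμTreg (Aset j) (hAopen j) δ hδpos
    set G : C(↥X, ℝ) := ∑ j ∈ Finset.Icc 1 (n-1), ε • h j with hG
    have hGapp : ∀ y, G y = ∑ j ∈ Finset.Icc 1 (n-1), ε * h j y := by
      intro y
      rw [hG]
      rw [ContinuousMap.coe_sum, Finset.sum_apply]
      exact Finset.sum_congr rfl fun j _ => by simp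
    -- counting argument : G ≤ u + C on X
    have hGle : ∀ y : ↥X, G y ≤ u y.1 + C := by
      intro y
      rw [hGapp]
      by_cases hcase : ∃ j ∈ Finset.Icc 1 (n-1), y ∈ Aset j
      · set F := (Finset.Icc 1 (n-1)).filter (fun j => y ∈ Aset j) with hF
        have hFne : F.Nonempty := by
          obtain ⟨j, hj1, hj2⟩ := hcase
          exact ⟨j, Finset.mem_filter.mpr ⟨hj1, hj2⟩⟩
        set k := F.max' hFne with hk
        have hkF : k ∈ F := F.max'_mem hFne
        have hkA : y ∈ Aset k := (Finset.mem_filter.mp hkF).2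
        have hsplit : ∑ j ∈ Finset.Icc 1 (n-1), ε * h j y = ∑ j ∈ F, ε * h j y := by
          symm
          refine Finset.sum_subset (Finset.filter_subset _ _) ?_
          intro j hj hjF
          have hyA : y ∉ Aset j := fun hyA => hjF (Finset.mem_filter.mpr ⟨hj, hyA⟩)
          rw [hhoff j y hyA, mul_zero]
        have hFsub : F ⊆ Finset.Icc 1 k := by
          intro j hj
          have h1 := (Finset.mem_Icc.mp (Finset.mem_filter.mp hj).1).1
          exact Finset.mem_Icc.mpr ⟨h1, F.le_max' j hj⟩
        have hcard : (F.card : ℝ) ≤ k := by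
          have h1 := Finset.card_le_card hFsub
          have h2 : (Finset.Icc 1 k).card = k := by rw [Nat.card_Icc]; omega
          exact_mod_cast h1.trans_eq h2
        have hsum : ∑ j ∈ F, ε * h j y ≤ F.card * ε := by
          calc ∑ j ∈ F, ε * h j y ≤ ∑ _j ∈ F, ε := by
                refine Finset.sum_le_sum fun j _ => ?_
                have := hh1 j y
                nlinarith
            _ = F.card * ε := by rw [Finset.sum_const, nsmul_eq_mul]
        have hky : (k:ℝ) * ε < φ y := hkA
        have hφy : φ y = u y.1 + C := rfl
        rw [hsplit]
        calc ∑ j ∈ F, ε * h j y ≤ F.card * ε := hsum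
          _ ≤ k * ε := by nlinarith
          _ ≤ u y.1 + C := by rw [← hφy]; exact hky.le
      · push_neg at hcase
        have h1 : ∀ j ∈ Finset.Icc 1 (n-1), ε * h j y = 0 := fun j hj => by
          rw [hhoff j y (hcase j hj), mul_zero]
        rw [Finset.sum_eq_zero h1]
        have := hφ0 y
        rw [hφ] at this; simp only [] at this
        linarith
    -- L G ≤ uhat z + C
    have hLC : L (ContinuousMap.const ↥X C) = C := by
      have h1 : ContinuousMap.const ↥X C = C • (1 : C(↥X, ℝ)) := by ext; simp
      rw [h1, L.map_smul, hL1, smul_eq_mul, mul_one]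
    have hgadm : ∀ y : ↥X, (G - ContinuousMap.const ↥X C) y ≤ u y.1 := by
      intro y
      simp only [ContinuousMap.sub_apply, ContinuousMap.const_apply]
      linarith [hGle y]
    have hLG2 : L G ≤ uhat z + C := by
      have h1 : L (G - ContinuousMap.const ↥X C) ≤ uhat z := hLu _ hgadm
      rw [map_sub, hLC] at h1
      linarith
    have hLGsum : L G = ∑ j ∈ Finset.Icc 1 (n-1), ε * L (h j) := by
      rw [hG, map_sum]
      exact Finset.sum_congr rfl fun j _ => by rw [L.map_smul, smul_eq_mul]
    -- putting the chain together
    have hsum1 : ∑ j ∈ Finset.Icc 1 (n-1), ε * (μT (Aset j)).toReal ≤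
        ∑ j ∈ Finset.Icc 1 (n-1), ε * (L (h j) + δ) := by
      refine Finset.sum_le_sum fun j _ => ?_
      refine mul_le_mul_of_nonneg_left ?_ hεpos.le
      have := hhμ j
      rw [hμTint (h j)] at this
      exact this
    have hcard_eq : (Finset.Icc 1 (n-1)).card = n - 1 := by
      rw [Nat.card_Icc]; omega
    have hcardn : ((Finset.Icc 1 (n-1)).card : ℝ) ≤ n := by
      rw [hcard_eq]
      exact_mod_cast Nat.sub_le n 1
    have hsum2 : ∑ j ∈ Finset.Icc 1 (n-1), ε * (L (h j) + δ) =
        (∑ j ∈ Finset.Icc 1 (n-1), ε * L (h j)) +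
          ((Finset.Icc 1 (n-1)).card : ℝ) * (ε * δ) := by
      have h1 : ∀ j ∈ Finset.Icc 1 (n-1), ε * (L (h j) + δ) = ε * L (h j) + ε * δ :=
        fun j _ => by ring
      rw [Finset.sum_congr rfl h1, Finset.sum_add_distrib, Finset.sum_const, nsmul_eq_mul]
    have hδ2 : ((Finset.Icc 1 (n-1)).card : ℝ) * (ε * δ) ≤ ε' / 2 := by
      have h3 : ((Finset.Icc 1 (n-1)).card : ℝ) * ε ≤ (n:ℝ) * ε + 1 := by
        nlinarith [hcardn, hεpos.le]
      have h4 : ((n:ℝ) * ε + 1) * δ = ε' / 2 := by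
        rw [hδ]
        have hne : (n:ℝ) * ε + 1 ≠ 0 := by positivity
        field_simp
      calc ((Finset.Icc 1 (n-1)).card : ℝ) * (ε * δ) =
            (((Finset.Icc 1 (n-1)).card : ℝ) * ε) * δ := by ring
        _ ≤ ((n:ℝ) * ε + 1) * δ := mul_le_mul_of_nonneg_right h3 hδpos.le
        _ = ε' / 2 := h4
    have huniv1 : (μT Set.univ).toReal = 1 := by simp [measure_univ]
    rw [huniv1, mul_one] at hslice
    have hφint : ∫ y, φ y ∂μT = (∫ y : ↥X, u y.1 ∂μT) + C := by
      have h1 : ∀ y : ↥X, φ y = u y.1 + C := fun y => rfl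
      rw [integral_congr_ae (Filter.Eventually.of_forall h1),
        integral_add huTint (integrable_const C), integral_const]
      simp [measure_univ]
    have hchain : (∫ y : ↥X, u y.1 ∂μT) + C ≤ ε + (uhat z + C + ε' / 2) := by
      calc (∫ y : ↥X, u y.1 ∂μT) + C = ∫ y, φ y ∂μT := hφint.symm
        _ ≤ ε + ∑ j ∈ Finset.Icc 1 (n-1), ε * (μT (Aset j)).toReal := hslice
        _ ≤ ε + ∑ j ∈ Finset.Icc 1 (n-1), ε * (L (h j) + δ) := by linarith [hsum1]
        _ = ε + ((∑ j ∈ Finset.Icc 1 (n-1), ε * L (h j)) +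
            ((Finset.Icc 1 (n-1)).card : ℝ) * (ε * δ)) := by rw [hsum2]
        _ ≤ ε + (L G + ε' / 2) := by
            rw [← hLGsum] at *
            linarith [hδ2]
        _ ≤ ε + (uhat z + C + ε' / 2) := by linarith [hLG2]
    have hεval : ε = ε' / 2 := hε
    linarith
  -- conclusion
  refine ⟨⟨μM, hμMprob, hμMXc, hjensen⟩, ?_⟩
  have hJmem : (∫ x, u x ∂μM) ∈ {t : ℝ | ∃ μ : Measure M,
      (IsProbabilityMeasure μ ∧ μ Xᶜ = 0 ∧ ∀ v ∈ E, v z ≤ ∫ x, v x ∂μ) ∧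
      t = ∫ x, u x ∂μ} := ⟨μM, ⟨hμMprob, hμMXc, hjensen⟩, rfl⟩
  refine le_antisymm ?_ ?_
  · refine le_csInf ⟨_, hJmem⟩ ?_
    rintro t ⟨μ, ⟨h1, h2, h3⟩, rfl⟩
    exact hEasy μ h1 h2 h3
  · refine (csInf_le ⟨uhat z, ?_⟩ hJmem).trans hKey
    rintro t ⟨μ, ⟨h1, h2, h3⟩, rfl⟩
    exact hEasy μ h1 h2 h3
end

section
/- Let Γ be a cone field on ℂᵏ (k ≥ 1) and let U ⊆ ℂᵏ be a nonempty bounded open set. Then for every u ∈ P_Γ and every x in the closure of U, u(x) ≤ sup_{ζ ∈ ∂U} u(ζ). In particular, the closure of U is contained in the Γ-hull of ∂U, i.e. Ū ⊆ (∂U)̂_Γ. -/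
noncomputable section

abbrev Ck (k : ℕ) := EuclideanSpace ℂ (Fin k)

/-- Levi form of a function `u : ℂᵏ → ℝ` at `z` in direction `ξ`. -/
def Levi {k : ℕ} (u : Ck k → ℝ) (z ξ : Ck k) : ℝ :=
  (1 / 4) * (iteratedFDeriv ℝ 2 u z ![ξ, ξ] +
    iteratedFDeriv ℝ 2 u z ![(Complex.I : ℂ) • ξ, (Complex.I : ℂ) • ξ])

/-- A cone field on `ℂᵏ`. -/
structure ConeField (k : ℕ) where
  Γ : Ck k → Set (Ck k)
  smul_mem : ∀ z : Ck k, ∀ ξ ∈ Γ z, ∀ t : ℝ, 0 ≤ t → t • ξ ∈ Γ z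
  exists_ne_zero : ∀ z : Ck k, ∃ ξ ∈ Γ z, ξ ≠ 0
  isClosed : IsClosed {p : Ck k × Ck k | p.2 ∈ Γ p.1}

/-- The cone `P_Γ`. -/
def PGamma {k : ℕ} (G : ConeField k) : Set (Ck k → ℝ) :=
  {u | ContDiff ℝ 2 u ∧ ∀ z : Ck k, ∀ ξ ∈ G.Γ z, 0 ≤ Levi u z ξ}

/-- The `Γ`-hull of a compact set `K`. -/
def gammaHull {k : ℕ} (G : ConeField k) (K : Set (Ck k)) : Set (Ck k) :=
  {z | ∀ u ∈ PGamma G, u z ≤ sSup (u '' K)}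

/-- Second derivative test: a `C²` function on `ℝ` with a local max at `0`
has nonpositive second derivative there. -/
lemma second_deriv_nonpos_of_isLocalMax {g : ℝ → ℝ} (hg : ContDiff ℝ 2 g)
    (h : IsLocalMax g 0) : deriv (deriv g) 0 ≤ 0 := by
  by_contra hpos
  push_neg at hpos
  have hg2 := contDiff_succ_iff_deriv.mp (by
    rw [(by norm_num : (2 : WithTop ℕ∞) = 1 + 1)] at hg; exact hg)
  have hdg : Differentiable ℝ g := hg2.1
  have hg1 : ContDiff ℝ 1 (deriv g) := hg2.2.2
  have hdg1 : Differentiable ℝ (deriv g) := hg1.differentiable one_ne_zero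
  have hcont : Continuous (deriv (deriv g)) := (contDiff_one_iff_deriv.mp hg1).2
  obtain ⟨δ, hδ, hball⟩ :=
    Metric.mem_nhds_iff.mp (hcont.continuousAt (Ioi_mem_nhds hpos))
  have h0 : deriv g 0 = 0 := h.deriv_eq_zero
  have hmono : StrictMonoOn (deriv g) (Set.Icc 0 (δ / 2)) := by
    apply strictMonoOn_of_deriv_pos (convex_Icc _ _) hdg1.continuous.continuousOn
    intro z hz
    rw [interior_Icc] at hz
    have : z ∈ Metric.ball (0 : ℝ) δ := by
      rw [Real.ball_eq_Ioo]
      constructor <;> [linarith [hz.1]; linarith [hz.2]]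
    exact hball this
  have hgm : StrictMonoOn g (Set.Icc 0 (δ / 2)) := by
    apply strictMonoOn_of_deriv_pos (convex_Icc _ _) hdg.continuous.continuousOn
    intro z hz
    rw [interior_Icc] at hz
    have := hmono ⟨le_rfl, by linarith⟩ ⟨hz.1.le, hz.2.le⟩ hz.1
    rwa [h0] at this
  obtain ⟨δ', hδ', hb'⟩ := Metric.eventually_nhds_iff.mp h
  set t := min (δ / 2) δ' / 2 with ht
  have hm1 : min (δ / 2) δ' ≤ δ / 2 := min_le_left _ _
  have hm2 : min (δ / 2) δ' ≤ δ' := min_le_right _ _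
  have ht0 : 0 < t := by positivity
  have h1 : g 0 < g t := hgm ⟨le_rfl, by linarith⟩ ⟨ht0.le, by rw [ht]; linarith⟩ ht0
  have h2 : g t ≤ g 0 := by
    apply hb'
    rw [Real.dist_eq, sub_zero, abs_of_pos ht0, ht]
    linarith
  linarith

/-- If `z ↦ u z + ε‖z‖²` has a local max at `x`, then the second derivative of
`u` at `x` in any direction `η` is at most `-2ε‖η‖²`. -/
lemma secondDeriv_bound_of_localMax {k : ℕ} {u : Ck k → ℝ} (hu : ContDiff ℝ 2 u)
    {ε : ℝ} {x : Ck k} (hmax : IsLocalMax (fun z => u z + ε * ‖z‖ ^ 2) x) (η : Ck k) :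
    iteratedFDeriv ℝ 2 u x ![η, η] + 2 * ε * ‖η‖ ^ 2 ≤ 0 := by
  set c : ℝ → Ck k := fun t => x + t • η with hc_def
  have hc : ∀ t : ℝ, HasDerivAt c η t := fun t => by
    simpa [hc_def] using ((hasDerivAt_id t).smul_const η).const_add x
  have hc0 : c 0 = x := by simp [hc_def]
  have hcC : ContDiff ℝ 2 c := contDiff_const.add (contDiff_id.smul contDiff_const)
  set G : ℝ → ℝ := fun t => u (c t) + ε * (inner ℝ (c t) (c t) : ℝ) with hG_def
  have hGmax : IsLocalMax G 0 := by
    have htend : Filter.Tendsto c (nhds 0) (nhds x) := by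
      rw [← hc0]; exact (hc 0).continuousAt.tendsto
    have hev := htend.eventually hmax
    refine hev.mono fun t ht => ?_
    show u (c t) + ε * (inner ℝ (c t) (c t) : ℝ) ≤ u (c 0) + ε * (inner ℝ (c 0) (c 0) : ℝ)
    rw [real_inner_self_eq_norm_sq, real_inner_self_eq_norm_sq, hc0]
    exact ht
  have hu' : Differentiable ℝ u := hu.differentiable two_ne_zero
  have hfd : ContDiff ℝ 1 (fderiv ℝ u) := hu.fderiv_right (by norm_num)
  have hG1 : ∀ t : ℝ, HasDerivAt G
      (fderiv ℝ u (c t) η + ε * ((inner ℝ (c t) η : ℝ) + (inner ℝ η (c t) : ℝ))) t := by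
    intro t
    have h1 : HasDerivAt (fun s => u (c s)) (fderiv ℝ u (c t) η) t :=
      (hu'.differentiableAt.hasFDerivAt).comp_hasDerivAt t (hc t)
    have h2 : HasDerivAt (fun s => (inner ℝ (c s) (c s) : ℝ))
        ((inner ℝ (c t) η : ℝ) + (inner ℝ η (c t) : ℝ)) t := (hc t).inner ℝ (hc t)
    exact h1.add (h2.const_mul ε)
  have hdG : deriv G = fun t =>
      fderiv ℝ u (c t) η + ε * ((inner ℝ (c t) η : ℝ) + (inner ℝ η (c t) : ℝ)) :=
    funext fun t => (hG1 t).deriv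
  have hF : HasFDerivAt (fderiv ℝ u) (fderiv ℝ (fderiv ℝ u) x) (c 0) := by
    rw [hc0]; exact (hfd.differentiable one_ne_zero).differentiableAt.hasFDerivAt
  have hB : HasDerivAt (fun t => fderiv ℝ u (c t) η) (fderiv ℝ (fderiv ℝ u) x η η) 0 := by
    have heval : HasFDerivAt (fun y => fderiv ℝ u y η)
        ((ContinuousLinearMap.apply ℝ ℝ η).comp (fderiv ℝ (fderiv ℝ u) x)) (c 0) :=
      (ContinuousLinearMap.apply ℝ ℝ η).hasFDerivAt.comp (c 0) hF
    have h := heval.comp_hasDerivAt 0 (hc 0)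
    simp only [ContinuousLinearMap.comp_apply, ContinuousLinearMap.apply_apply] at h
    exact h
  have hC' : HasDerivAt (fun t => (inner ℝ (c t) η : ℝ) + (inner ℝ η (c t) : ℝ))
      (2 * ‖η‖ ^ 2) 0 := by
    have h1 : HasDerivAt (fun t => (inner ℝ (c t) η : ℝ))
        ((inner ℝ (c 0) (0 : Ck k) : ℝ) + (inner ℝ η η : ℝ)) 0 :=
      (hc 0).inner ℝ (hasDerivAt_const 0 η)
    have h2 : HasDerivAt (fun t => (inner ℝ η (c t) : ℝ))
        ((inner ℝ η η : ℝ) + (inner ℝ (0 : Ck k) (c 0) : ℝ)) 0 :=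
      (hasDerivAt_const 0 η).inner ℝ (hc 0)
    have h3 := h1.add h2
    have hval : ((inner ℝ (c 0) (0 : Ck k) : ℝ) + (inner ℝ η η : ℝ)) +
        ((inner ℝ η η : ℝ) + (inner ℝ (0 : Ck k) (c 0) : ℝ)) = 2 * ‖η‖ ^ 2 := by
      simp only [inner_zero_right, inner_zero_left, real_inner_self_eq_norm_sq]
      ring
    rwa [hval] at h3
  have hG2 : HasDerivAt (deriv G)
      (fderiv ℝ (fderiv ℝ u) x η η + ε * (2 * ‖η‖ ^ 2)) 0 := by
    rw [hdG]; exact hB.add (hC'.const_mul ε)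
  have hGC : ContDiff ℝ 2 G :=
    (hu.comp hcC).add (contDiff_const.mul (hcC.inner ℝ hcC))
  have hle := second_deriv_nonpos_of_isLocalMax hGC hGmax
  rw [hG2.deriv] at hle
  rw [iteratedFDeriv_two_apply]
  simp only [Matrix.cons_val_zero, Matrix.cons_val_one, Matrix.head_cons]
  linarith

/-- (ℂᵏ case of Theorem 3.8.)  For a cone field `Γ` and a nonempty bounded
open set `U ⊆ ℂᵏ`, every `u ∈ P_Γ` satisfies the maximum principle
`u(x) ≤ sup_{∂U} u` on the closure of `U`; in particular
`closure U ⊆ (∂U)̂_Γ`. -/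
theorem closure_subset_gammaHull_frontier {k : ℕ} (hk : 1 ≤ k)
    (G : ConeField k) (U : Set (Ck k))
    (hU_open : IsOpen U) (hU_ne : U.Nonempty) (hU_bdd : Bornology.IsBounded U) :
    (∀ u ∈ PGamma G, ∀ x ∈ closure U, u x ≤ sSup (u '' frontier U)) ∧
    closure U ⊆ gammaHull G (frontier U) := by
  haveI : Nonempty (Fin k) := ⟨⟨0, hk⟩⟩
  have hmain : ∀ u ∈ PGamma G, ∀ x ∈ closure U, u x ≤ sSup (u '' frontier U) := by
    intro u hu x hx
    obtain ⟨huC, huL⟩ := hu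
    have hKc : IsCompact (closure U) := hU_bdd.isCompact_closure
    have hUne : U ≠ Set.univ := by
      intro h
      exact NormedSpace.unbounded_univ ℝ (Ck k) (h ▸ hU_bdd)
    have hfr_ne : (frontier U).Nonempty := nonempty_frontier_iff.mpr ⟨hU_ne, hUne⟩
    have hfrc : IsCompact (frontier U) :=
      hKc.of_isClosed_subset isClosed_frontier frontier_subset_closure
    have hbdd : BddAbove (u '' frontier U) := (hfrc.image huC.continuous).bddAbove
    obtain ⟨R, hR⟩ := hU_bdd.subset_closedBall 0
    have hRc : closure U ⊆ Metric.closedBall 0 R :=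
      closure_minimal hR Metric.isClosed_closedBall
    have hR0 : 0 ≤ R := le_trans dist_nonneg (hRc hx)
    set M := sSup (u '' frontier U) with hM
    have key : ∀ ε : ℝ, 0 < ε → u x ≤ M + ε * R ^ 2 := by
      intro ε hε
      set v : Ck k → ℝ := fun z => u z + ε * ‖z‖ ^ 2 with hv
      have hvc : ContinuousOn v (closure U) :=
        (huC.continuous.add (continuous_const.mul (continuous_norm.pow 2))).continuousOn
      obtain ⟨x₀, hx₀mem, hx₀max⟩ := hKc.exists_isMaxOn ⟨x, hx⟩ hvc
      have hx₀front : x₀ ∈ frontier U := by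
        by_contra hnf
        have hx₀U : x₀ ∈ U := by
          by_contra hnu
          exact hnf (by rw [hU_open.frontier_eq]; exact ⟨hx₀mem, hnu⟩)
        have hlocal : IsLocalMax v x₀ :=
          Filter.eventually_of_mem (hU_open.mem_nhds hx₀U)
            fun y hy => isMaxOn_iff.mp hx₀max y (subset_closure hy)
        obtain ⟨ξ, hξΓ, hξ0⟩ := G.exists_ne_zero x₀
        have hA := secondDeriv_bound_of_localMax huC hlocal ξ
        have hB := secondDeriv_bound_of_localMax huC hlocal ((Complex.I : ℂ) • ξ)
        have hnormI : ‖(Complex.I : ℂ) • ξ‖ = ‖ξ‖ := by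
          rw [norm_smul, Complex.norm_I, one_mul]
        rw [hnormI] at hB
        have hLevi := huL x₀ ξ hξΓ
        rw [Levi] at hLevi
        have hξpos : 0 < ‖ξ‖ ^ 2 := pow_pos (norm_pos_iff.mpr hξ0) 2
        nlinarith
      have hux₀ : u x₀ ≤ M := le_csSup hbdd ⟨x₀, hx₀front, rfl⟩
      have h1 : v x ≤ v x₀ := isMaxOn_iff.mp hx₀max x hx
      have h2 : ‖x₀‖ ≤ R := mem_closedBall_zero_iff.mp (hRc hx₀mem)
      have h3 : ‖x₀‖ ^ 2 ≤ R ^ 2 := by nlinarith [norm_nonneg x₀]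
      have h4 : (0 : ℝ) ≤ ε * ‖x‖ ^ 2 := by positivity
      simp only [hv] at h1
      nlinarith
    refine le_of_forall_pos_le_add fun ε hε => ?_
    have hkey := key (ε / (R ^ 2 + 1)) (by positivity)
    have hfin : ε / (R ^ 2 + 1) * R ^ 2 ≤ ε := by
      rw [div_mul_eq_mul_div, div_le_iff₀ (by positivity)]
      nlinarith
    linarith
  exact ⟨hmain, fun x hx u hu => hmain u hu x hx⟩
end
end

section
/- Let Γ be a cone field on ℂᵏ (k ≥ 1) and let K ⊆ ℂᵏ be a nonempty compact set. Assume that every point of K is a Jensen boundary point for P_Γ: for each x ∈ K, the only Jensen measure for x with respect to P_Γ supported on K is the Dirac mass δ_x. Let u : K → ℝ be bounded and lower semicontinuous, and for x ∈ K̂_Γ set û_Γ(x) := sup{v(x) : v ∈ P_Γ, v(w) ≤ u(w) for all w ∈ K}. Then û_Γ(x) = u(x) for every x ∈ K, and for every x ∈ K̂_Γ the set of Jensen measures for x with respect to P_Γ supported on K is nonempty and û_Γ(x) = inf{∫ u dμ : μ a Jensen measure for x with respect to P_Γ supported on K}. -/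
open MeasureTheory

noncomputable section

instance {k : ℕ} : MeasurableSpace (Ck k) := MeasurableSpace.comap WithLp.ofLp MeasurableSpace.pi
instance {k : ℕ} : BorelSpace (Ck k) := PiLp.borelSpace 2

/-- A Jensen measure for `x` with respect to a family `P` of functions,
supported on `K`. -/
def IsJensenMeasure {k : ℕ} (P : Set (Ck k → ℝ)) (K : Set (Ck k)) (x : Ck k)
    (μ : Measure (Ck k)) : Prop :=
  IsProbabilityMeasure μ ∧ μ Kᶜ = 0 ∧ ∀ v ∈ P, v x ≤ ∫ z, v z ∂μ


set_option linter.unusedSectionVars false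
set_option linter.unusedVariables false
set_option maxHeartbeats 1000000

open scoped ENNReal NNReal

section RieszRepresentation

open Set

namespace RMKaux

variable {X : Type*} [MetricSpace X] [CompactSpace X] [Nonempty X]
  [MeasurableSpace X] [BorelSpace X]

lemma cm_integrable (μ : Measure X) [IsFiniteMeasure μ] (f : C(X, ℝ)) :
    Integrable f μ :=
  Integrable.mono' (integrable_const ‖f‖) f.continuous.aestronglyMeasurable
    (Filter.Eventually.of_forall fun x => f.norm_coe_le_norm x)

variable (L : C(X, ℝ) →ₗ[ℝ] ℝ)

def rcSet (s : Set X) : Set ℝ :=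
  {r | ∃ f : C(X, ℝ), (∀ x, 0 ≤ f x) ∧ (∀ x ∈ s, 1 ≤ f x) ∧ r = L f}

lemma rcSet_nonempty (s : Set X) : (rcSet L s).Nonempty :=
  ⟨L 1, 1, fun x => by simp, fun x _ => by simp, rfl⟩

variable (hL : ∀ f : C(X, ℝ), (∀ x, 0 ≤ f x) → 0 ≤ L f)
include hL

lemma L_mono {f g : C(X, ℝ)} (h : ∀ x, f x ≤ g x) : L f ≤ L g := by
  have h0 : 0 ≤ L (g - f) := hL _ (fun x => by simp [sub_nonneg, h x])
  have : L (g - f) = L g - L f := by rw [map_sub]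
  linarith

lemma rcSet_bddBelow (s : Set X) : BddBelow (rcSet L s) := by
  refine ⟨0, fun r hr => ?_⟩
  obtain ⟨f, hf0, _, rfl⟩ := hr
  exact hL f hf0

omit hL in
def rc (s : Set X) : ℝ := sInf (rcSet L s)

lemma rc_nonneg (s : Set X) : 0 ≤ rc L s :=
  le_csInf (rcSet_nonempty L s) (fun r hr => by
    obtain ⟨f, hf0, _, rfl⟩ := hr; exact hL f hf0)

lemma rc_le {s : Set X} {f : C(X, ℝ)} (hf0 : ∀ x, 0 ≤ f x) (hf1 : ∀ x ∈ s, 1 ≤ f x) :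
    rc L s ≤ L f :=
  csInf_le (rcSet_bddBelow L hL s) ⟨f, hf0, hf1, rfl⟩

lemma rc_mono {s t : Set X} (h : s ⊆ t) : rc L s ≤ rc L t := by
  apply csInf_le_csInf (rcSet_bddBelow L hL s) (rcSet_nonempty L t)
  rintro r ⟨f, hf0, hf1, rfl⟩
  exact ⟨f, hf0, fun x hx => hf1 x (h hx), rfl⟩

lemma rc_union_le (s t : Set X) : rc L (s ∪ t) ≤ rc L s + rc L t := by
  refine le_of_forall_pos_le_add (fun ε hε => ?_)
  obtain ⟨r1, hr1, hr1lt⟩ := exists_lt_of_csInf_lt (rcSet_nonempty L s)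
    (show rc L s < rc L s + ε / 2 by linarith)
  obtain ⟨r2, hr2, hr2lt⟩ := exists_lt_of_csInf_lt (rcSet_nonempty L t)
    (show rc L t < rc L t + ε / 2 by linarith)
  obtain ⟨f, hf0, hf1, rfl⟩ := hr1
  obtain ⟨g, hg0, hg1, rfl⟩ := hr2
  have hval : rc L (s ∪ t) ≤ L (f + g) := by
    refine rc_le L hL (fun x => ?_) (fun x hx => ?_)
    · have := hf0 x; have := hg0 x
      simp only [ContinuousMap.add_apply]; linarith
    · rcases hx with hx | hx
      · have := hg0 x; have := hf1 x hx
        simp only [ContinuousMap.add_apply]; linarith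
      · have := hf0 x; have := hg1 x hx
        simp only [ContinuousMap.add_apply]; linarith
  rw [map_add] at hval
  linarith

lemma rc_add_le_of_disjoint {s t : Set X} (hs : IsClosed s) (ht : IsClosed t)
    (hd : Disjoint s t) : rc L s + rc L t ≤ rc L (s ∪ t) := by
  refine le_csInf (rcSet_nonempty L _) ?_
  rintro r ⟨f, hf0, hf1, rfl⟩
  obtain ⟨g, hg0, hg1, hg01⟩ := exists_continuous_zero_one_of_isClosed ht hs hd.symm
  have h1 : rc L s ≤ L (f * g) := by
    refine rc_le L hL (fun x => ?_) (fun x hx => ?_)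
    · exact mul_nonneg (hf0 x) (hg01 x).1
    ·
      have : g x = 1 := hg1 hx
      simp only [ContinuousMap.mul_apply, this, mul_one]
      exact hf1 x (Or.inl hx)
  have h2 : rc L t ≤ L (f * (1 - g)) := by
    refine rc_le L hL (fun x => ?_) (fun x hx => ?_)
    · have := (hg01 x).2
      simp only [ContinuousMap.mul_apply, ContinuousMap.sub_apply, ContinuousMap.one_apply]
      exact mul_nonneg (hf0 x) (by linarith)
    ·
      have hgx : g x = 0 := hg0 hx
      simp only [ContinuousMap.mul_apply, ContinuousMap.sub_apply, ContinuousMap.one_apply, hgx]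
      simpa using hf1 x (Or.inr hx)
  have : f * g + f * (1 - g) = f := by ring
  calc rc L s + rc L t ≤ L (f * g) + L (f * (1 - g)) := add_le_add h1 h2
    _ = L (f * g + f * (1 - g)) := (map_add L _ _).symm
    _ = L f := by rw [this]

def rmkContent : Content X where
  toFun := fun Kc => ⟨rc L Kc, rc_nonneg L hL Kc⟩
  mono' := fun K1 K2 h => by
    show rc L _ ≤ rc L _
    exact rc_mono L hL h
  sup_disjoint' := fun K1 K2 hd h1 h2 => by
    apply NNReal.eq
    show rc L _ = rc L _ + rc L _
    exact le_antisymm (by simpa using rc_union_le L hL K1 K2)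
      (by simpa using rc_add_le_of_disjoint L hL h1 h2 hd)
  sup_le' := fun K1 K2 => by
    show rc L _ ≤ rc L _ + rc L _
    simpa using rc_union_le L hL K1 K2


def rmkMeasure : Measure X := (rmkContent L hL).measure

lemma coe_rmkContent (Kc : TopologicalSpace.Compacts X) :
    (rmkContent L hL Kc : ℝ≥0∞) = ENNReal.ofReal (rc L (Kc : Set X)) := by
  have : Real.toNNReal (rc L (Kc : Set X)) = ⟨rc L (Kc : Set X), rc_nonneg L hL _⟩ :=
    Real.toNNReal_of_nonneg (rc_nonneg L hL _)
  rw [ENNReal.ofReal, this]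
  rfl

lemma rmkMeasure_univ : rmkMeasure L hL Set.univ = ENNReal.ofReal (L 1) := by
  have h1 : rmkMeasure L hL Set.univ = (rmkContent L hL).outerMeasure Set.univ :=
    Content.measure_apply _ MeasurableSet.univ
  have h2 : (rmkContent L hL).outerMeasure Set.univ
      = (rmkContent L hL).innerContent ⟨Set.univ, isOpen_univ⟩ :=
    Content.outerMeasure_of_isOpen _ _ isOpen_univ
  have h3 : (rmkContent L hL).innerContent ⟨Set.univ, isOpen_univ⟩
      = (rmkContent L hL) ⟨Set.univ, isCompact_univ⟩ := by
    apply le_antisymm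
    · refine iSup_le fun Kc => iSup_le fun _ => ?_
      exact ENNReal.coe_le_coe.2 ((rmkContent L hL).mono' Kc ⟨Set.univ, isCompact_univ⟩
        (Set.subset_univ _))
    · exact Content.le_innerContent _ _ _ (Set.subset_univ _)
  have h4 : rc L (Set.univ : Set X) = L 1 := by
    apply le_antisymm
    · exact rc_le L hL (fun x => by simp) (fun x _ => by simp)
    · refine le_csInf (rcSet_nonempty L _) ?_
      rintro r ⟨f, hf0, hf1, rfl⟩
      exact L_mono L hL (fun x => by simpa using hf1 x (Set.mem_univ x))
  rw [h1, h2, h3]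
  rw [coe_rmkContent L hL]
  simp only [TopologicalSpace.Compacts.coe_mk]
  rw [h4]

instance rmk_finite : IsFiniteMeasure (rmkMeasure L hL) :=
  ⟨by rw [rmkMeasure_univ L hL]; exact ENNReal.ofReal_lt_top⟩

lemma rmk_compact_bound {s : Set X} (hs : IsCompact s) (f : C(X, ℝ))
    (hf0 : ∀ x, 0 ≤ f x) {c : ℝ} (hc : 0 < c) (hfs : ∀ x ∈ s, c < f x) :
    rmkMeasure L hL s ≤ ENNReal.ofReal (L f / c) := by
  set U : Set X := f ⁻¹' (Set.Ioi c) with hU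
  have hUo : IsOpen U := f.continuous.isOpen_preimage _ isOpen_Ioi
  have hsU : s ⊆ U := fun x hx => hfs x hx
  have hmeas : rmkMeasure L hL s = (rmkContent L hL).outerMeasure s :=
    Content.measure_apply _ (hs.isClosed.measurableSet)
  rw [hmeas]
  calc (rmkContent L hL).outerMeasure s ≤ (rmkContent L hL).outerMeasure U :=
        measure_mono hsU
    _ = (rmkContent L hL).innerContent ⟨U, hUo⟩ :=
        Content.outerMeasure_of_isOpen _ _ hUo
    _ ≤ ENNReal.ofReal (L f / c) := by
        refine iSup_le fun Kc => iSup_le fun hKc => ?_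
        have hrc : rc L (Kc : Set X) ≤ L (c⁻¹ • f) := by
          refine rc_le L hL (fun x => ?_) (fun x hx => ?_)
          · simpa using mul_nonneg (inv_nonneg.2 hc.le) (hf0 x)
          · have hcf : c < f x := hKc hx
            have : 1 ≤ c⁻¹ * f x := by
              rw [← div_eq_inv_mul, le_div_iff₀ hc]
              linarith
            simpa using this
        have hLs : L (c⁻¹ • f) = L f / c := by
          rw [_root_.map_smul, smul_eq_mul, div_eq_inv_mul]
        calc ((rmkContent L hL).toFun Kc : ℝ≥0∞)
            = ENNReal.ofReal (rc L (Kc : Set X)) := coe_rmkContent L hL Kc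
          _ ≤ ENNReal.ofReal (L f / c) := by
              refine ENNReal.ofReal_le_ofReal ?_
              rw [← hLs]; exact hrc


lemma rmk_integral_nonneg_le (f : C(X, ℝ)) (hf0 : ∀ x, 0 ≤ f x) :
    ∫ x, f x ∂(rmkMeasure L hL) ≤ L f := by
  set μ := rmkMeasure L hL with hμ
  set M : ℝ := (μ Set.univ).toReal with hM
  have hLf : 0 ≤ L f := hL f hf0
  have hM0 : 0 ≤ M := ENNReal.toReal_nonneg
  have key : ∀ n : ℕ, 1 ≤ n →
      ∫ x, f x ∂μ ≤ (‖f‖ + 1) * (1 / (n : ℝ)) * M + (1 + 1 / (n : ℝ)) * L f := by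
    intro n hn
    set N : ℝ := (n : ℝ) with hNdef
    have hN : 1 ≤ N := by rw [hNdef]; exact_mod_cast hn
    have hN0 : 0 < N := by linarith
    have hnf : 0 ≤ ‖f‖ := norm_nonneg f
    set δ : ℝ := (‖f‖ + 1) / N with hδdef
    have hδ : 0 < δ := div_pos (by linarith) hN0
    set c : ℝ := δ * N / (N + 1) with hcdef
    have hc : 0 < c := div_pos (mul_pos hδ hN0) (by linarith)
    have hcδ : c < δ := by
      rw [hcdef, div_lt_iff₀ (by linarith : (0:ℝ) < N + 1)]
      nlinarith
    -- the truncations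
    set g : ℕ → C(X, ℝ) := fun i => ⟨fun x => min (f x) ((i : ℝ) * δ),
      f.continuous.min continuous_const⟩ with hgdef
    set h : ℕ → C(X, ℝ) := fun i => g (i + 1) - g i with hhdef
    have hg_apply : ∀ i x, g i x = min (f x) ((i : ℝ) * δ) := fun i x => rfl
    have hh_apply : ∀ i x, h i x = min (f x) (((i : ℝ) + 1) * δ) - min (f x) ((i : ℝ) * δ) := by
      intro i x
      simp only [hhdef, ContinuousMap.sub_apply, hg_apply]
      push_cast
      ring_nf
    have hh0 : ∀ i x, 0 ≤ h i x := by
      intro i x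
      rw [hh_apply]
      have : (i : ℝ) * δ ≤ ((i : ℝ) + 1) * δ := by nlinarith
      have := min_le_min (le_refl (f x)) this
      linarith
    have hhδ : ∀ i x, h i x ≤ δ := by
      intro i x
      rw [hh_apply]
      rcases le_total (f x) ((i : ℝ) * δ) with hfx | hfx
      · rw [min_eq_left hfx, min_eq_left (by nlinarith : f x ≤ ((i : ℝ) + 1) * δ)]
        linarith
      · rw [min_eq_right hfx]
        have : min (f x) (((i : ℝ) + 1) * δ) ≤ ((i : ℝ) + 1) * δ := min_le_right _ _
        nlinarith
    have hsum : ∑ i ∈ Finset.range n, h i = f := by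
      have := Finset.sum_range_sub (fun i => g i) n
      rw [hhdef]
      rw [this]
      ext x
      simp only [ContinuousMap.sub_apply, hg_apply]
      have h1 : min (f x) ((n : ℝ) * δ) = f x := by
        apply min_eq_left
        have hfb : f x ≤ ‖f‖ := le_trans (le_abs_self _) (f.norm_coe_le_norm x)
        have : (n : ℝ) * δ = ‖f‖ + 1 := by
          rw [hδdef]; field_simp; exact hNdef.symm
        linarith
      simp only [Nat.cast_zero, zero_mul]
      rw [h1, min_eq_right (hf0 x)]
      ring
    -- level sets
    set s : ℕ → Set X := fun i => f ⁻¹' (Set.Ici ((i : ℝ) * δ)) with hsdef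
    have hs_closed : ∀ i, IsClosed (s i) := fun i => isClosed_Ici.preimage f.continuous
    have hs_meas : ∀ i, MeasurableSet (s i) := fun i => (hs_closed i).measurableSet
    have hs_compact : ∀ i, IsCompact (s i) := fun i => (hs_closed i).isCompact
    set m : ℕ → ℝ := fun i => (μ (s i)).toReal with hmdef
    have hm0 : ∀ i, 0 ≤ m i := fun i => ENNReal.toReal_nonneg
    have hmM : ∀ i, m i ≤ M := by
      intro i
      exact ENNReal.toReal_mono (measure_ne_top μ _) (measure_mono (Set.subset_univ _))
    -- integral bound
    have hint : ∀ i, ∫ x, h i x ∂μ ≤ δ * m i := by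
      intro i
      have hpt : ∀ x, h i x ≤ Set.indicator (s i) (fun _ => δ) x := by
        intro x
        by_cases hx : x ∈ s i
        · rw [Set.indicator_of_mem hx]
          exact hhδ i x
        · rw [Set.indicator_of_notMem hx]
          have hfx : f x < (i : ℝ) * δ := by
            simp only [hsdef, Set.mem_preimage, Set.mem_Ici, not_le] at hx
            exact hx
          rw [hh_apply, min_eq_left hfx.le, min_eq_left (by nlinarith : f x ≤ ((i:ℝ)+1) * δ)]
          simp
      have hind : ∫ x, Set.indicator (s i) (fun _ => δ) x ∂μ = (μ (s i)).toReal • δ :=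
        integral_indicator_const δ (hs_meas i)
      calc ∫ x, h i x ∂μ ≤ ∫ x, Set.indicator (s i) (fun _ => δ) x ∂μ := by
            apply integral_mono (cm_integrable μ (h i))
              ((integrable_const δ).indicator (hs_meas i)) hpt
        _ = m i * δ := by rw [hind]; simp [hmdef, smul_eq_mul]
        _ = δ * m i := mul_comm _ _
    -- functional bound
    have hfun : ∀ i, c * m (i + 1) ≤ L (h i) := by
      intro i
      have hbd := rmk_compact_bound L hL (hs_compact (i + 1)) (h i) (hh0 i) hc ?_
      · have hLh : 0 ≤ L (h i) := hL _ (hh0 i)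
        have := ENNReal.toReal_le_of_le_ofReal (by positivity) hbd
        rw [← hμ] at this
        calc c * m (i + 1) ≤ c * (L (h i) / c) := by
              apply mul_le_mul_of_nonneg_left _ hc.le
              exact this
          _ = L (h i) := by field_simp
      · intro x hx
        have hfx : ((i : ℝ) + 1) * δ ≤ f x := by
          simp only [hsdef, Set.mem_preimage, Set.mem_Ici] at hx
          push_cast at hx
          linarith
        have : h i x = δ := by
          rw [hh_apply, min_eq_right hfx, min_eq_right (by nlinarith : (i:ℝ) * δ ≤ f x)]
          ring
        rw [this]
        exact hcδ
    -- sum up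
    set T : ℝ := ∑ i ∈ Finset.range n, m (i + 1) with hTdef
    have hT0 : 0 ≤ T := Finset.sum_nonneg fun i _ => hm0 _
    have hTL : c * T ≤ L f := by
      have h1 : ∑ i ∈ Finset.range n, c * m (i + 1) ≤ ∑ i ∈ Finset.range n, L (h i) :=
        Finset.sum_le_sum fun i _ => hfun i
      rw [← Finset.mul_sum] at h1
      have h2 : ∑ i ∈ Finset.range n, L (h i) = L f := by
        rw [← map_sum, hsum]
      rw [h2] at h1
      exact h1
    have hIS : ∫ x, f x ∂μ ≤ δ * (M + T) := by
      have h1 : ∫ x, f x ∂μ = ∑ i ∈ Finset.range n, ∫ x, h i x ∂μ := by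
        rw [← integral_finset_sum _ (fun i _ => cm_integrable μ (h i))]
        apply integral_congr_ae
        apply Filter.Eventually.of_forall
        intro x
        rw [← hsum]
        simp [ContinuousMap.coe_sum, Finset.sum_apply]
      have h2 : ∑ i ∈ Finset.range n, ∫ x, h i x ∂μ ≤ δ * ∑ i ∈ Finset.range n, m i := by
        rw [Finset.mul_sum]
        exact Finset.sum_le_sum fun i _ => hint i
      have h3 : ∑ i ∈ Finset.range n, m i ≤ M + T := by
        have ha : ∑ i ∈ Finset.range n, m i ≤ ∑ i ∈ Finset.range (n + 1), m i := by
          apply Finset.sum_le_sum_of_subset_of_nonneg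
          · exact Finset.range_subset_range.2 (Nat.le_succ n)
          · intro i _ _; exact hm0 i
        have hb : ∑ i ∈ Finset.range (n + 1), m i = (∑ i ∈ Finset.range n, m (i + 1)) + m 0 :=
          Finset.sum_range_succ' m n
        have hc0 : m 0 ≤ M := hmM 0
        rw [hb] at ha
        rw [← hTdef] at ha
        linarith
      calc ∫ x, f x ∂μ ≤ δ * ∑ i ∈ Finset.range n, m i := h1 ▸ h2
        _ ≤ δ * (M + T) := by nlinarith
    -- conclude
    have hdc : δ / c = 1 + 1 / N := by
      rw [hcdef]
      field_simp
    have hδT : δ * T ≤ (1 + 1 / N) * L f := by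
      have : δ * T = (δ / c) * (c * T) := by field_simp
      rw [this, hdc]
      apply mul_le_mul_of_nonneg_left hTL
      positivity
    have hδM : δ * M = (‖f‖ + 1) * (1 / N) * M := by
      rw [hδdef]; ring
    calc ∫ x, f x ∂μ ≤ δ * (M + T) := hIS
      _ = δ * M + δ * T := by ring
      _ ≤ (‖f‖ + 1) * (1 / N) * M + (1 + 1 / N) * L f := by
          rw [hδM]; linarith
  -- take the limit
  have hlim : Filter.Tendsto
      (fun n : ℕ => (‖f‖ + 1) * (1 / (n : ℝ)) * M + (1 + 1 / (n : ℝ)) * L f)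
      Filter.atTop (nhds ((‖f‖ + 1) * 0 * M + (1 + 0) * L f)) := by
    have h0 : Filter.Tendsto (fun n : ℕ => 1 / (n : ℝ)) Filter.atTop (nhds 0) :=
      tendsto_one_div_atTop_nhds_zero_nat
    exact (((h0.const_mul _).mul_const _)).add (((h0.const_add 1)).mul_const _)
  have : (‖f‖ + 1) * 0 * M + (1 + 0) * L f = L f := by ring
  rw [this] at hlim
  refine ge_of_tendsto hlim ?_
  filter_upwards [Filter.eventually_ge_atTop 1] with n hn
  exact key n hn

theorem rmk_exists :
    ∃ μ : Measure X, μ Set.univ = ENNReal.ofReal (L 1) ∧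
      ∀ f : C(X, ℝ), ∫ x, f x ∂μ = L f := by
  refine ⟨rmkMeasure L hL, rmkMeasure_univ L hL, fun f => ?_⟩
  set μ := rmkMeasure L hL with hμ
  have hM : (μ Set.univ).toReal = L 1 := by
    rw [rmkMeasure_univ L hL]
    exact ENNReal.toReal_ofReal (hL 1 (fun x => by simp))
  have hconst : ∀ c : ℝ, ∫ x, (ContinuousMap.const X c) x ∂μ = L (ContinuousMap.const X c) := by
    intro c
    have h1 : (ContinuousMap.const X c) = c • (1 : C(X, ℝ)) := by
      ext x; simp
    rw [h1, _root_.map_smul, smul_eq_mul]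
    simp only [ContinuousMap.smul_apply, ContinuousMap.one_apply, smul_eq_mul, mul_one]
    rw [integral_const, measureReal_def, hM]
    simp only [smul_eq_mul]
    ring
  have hup : ∀ g : C(X, ℝ), (∀ x, 0 ≤ g x) → ∫ x, g x ∂μ ≤ L g :=
    fun g hg => rmk_integral_nonneg_le L hL g hg
  -- apply to f + ‖f‖ and ‖f‖ - f
  have hb : ∀ x, |f x| ≤ ‖f‖ := fun x => f.norm_coe_le_norm x
  have h1 := hup (f + ContinuousMap.const X ‖f‖) (fun x => by
    have := hb x
    simp only [ContinuousMap.add_apply, ContinuousMap.const_apply]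
    cases' abs_le.1 this with hl hr
    linarith)
  have h2 := hup (ContinuousMap.const X ‖f‖ - f) (fun x => by
    have := hb x
    simp only [ContinuousMap.sub_apply, ContinuousMap.const_apply]
    cases' abs_le.1 this with hl hr
    linarith)
  have hint_f : Integrable (⇑f) μ := cm_integrable μ f
  have hint_c : Integrable (⇑(ContinuousMap.const X ‖f‖)) μ := cm_integrable μ _
  have e1 : ∫ x, (f + ContinuousMap.const X ‖f‖) x ∂μ
      = ∫ x, f x ∂μ + ∫ x, (ContinuousMap.const X ‖f‖) x ∂μ := by
    simp only [ContinuousMap.add_apply]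
    exact integral_add hint_f hint_c
  have e2 : ∫ x, (ContinuousMap.const X ‖f‖ - f) x ∂μ
      = ∫ x, (ContinuousMap.const X ‖f‖) x ∂μ - ∫ x, f x ∂μ := by
    simp only [ContinuousMap.sub_apply]
    exact integral_sub hint_c hint_f
  rw [e1, map_add, hconst ‖f‖] at h1
  rw [e2, map_sub, hconst ‖f‖] at h2
  linarith

end RMKaux

end RieszRepresentation

namespace ApproxAux

variable {X : Type*} [MetricSpace X] [CompactSpace X] [Nonempty X]

lemma exists_approx (g : X → ℝ) (hlsc : LowerSemicontinuous g) {C : ℝ}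
    (hb : ∀ x, |g x| ≤ C) :
    ∃ F : ℕ → C(X, ℝ),
      (∀ n x, F n x ≤ g x) ∧
      (∀ m n : ℕ, m ≤ n → ∀ x, F m x ≤ F n x) ∧
      (∀ x, Filter.Tendsto (fun n => F n x) Filter.atTop (nhds (g x))) := by
  have hgC : ∀ x, -C ≤ g x := fun x => neg_le_of_abs_le (hb x)
  set F0 : ℕ → X → ℝ := fun n x => ⨅ z : X, (g z + n * dist x z) with hF0
  have hbdd : ∀ (n : ℕ) (x : X), BddBelow (Set.range fun z => g z + n * dist x z) := by
    intro n x
    refine ⟨-C, ?_⟩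
    rintro _ ⟨z, rfl⟩
    have h1 := hgC z
    have h2 : (0:ℝ) ≤ (n : ℝ) * dist x z := by positivity
    show -C ≤ g z + (n : ℝ) * dist x z
    linarith
  have hle : ∀ n x, F0 n x ≤ g x := by
    intro n x
    have := ciInf_le (hbdd n x) x
    simpa using this
  have hlb : ∀ n x, -C ≤ F0 n x := by
    intro n x
    refine le_ciInf fun z => ?_
    have : (0:ℝ) ≤ (n : ℝ) * dist x z := by positivity
    linarith [hgC z]
  have hmono : ∀ m n : ℕ, m ≤ n → ∀ x, F0 m x ≤ F0 n x := by
    intro m n hmn x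
    refine le_ciInf fun z => ?_
    refine le_trans (ciInf_le (hbdd m x) z) ?_
    have : (m : ℝ) * dist x z ≤ (n : ℝ) * dist x z :=
      mul_le_mul_of_nonneg_right (by exact_mod_cast hmn) dist_nonneg
    linarith
  have hLip : ∀ (n : ℕ) (a b : X), F0 n a ≤ F0 n b + n * dist a b := by
    intro n a b
    have key : ∀ z, F0 n a - n * dist a b ≤ g z + n * dist b z := by
      intro z
      have h1 := ciInf_le (hbdd n a) z
      have h2 : dist a z ≤ dist a b + dist b z := dist_triangle a b z
      have h3 : (n:ℝ) * dist a z ≤ (n:ℝ) * (dist a b + dist b z) :=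
        mul_le_mul_of_nonneg_left h2 (by positivity)
      have h4 : F0 n a ≤ g z + n * dist a z := h1
      nlinarith
    have := le_ciInf key
    simp only [hF0] at this ⊢
    linarith [this]
  have hcont : ∀ n : ℕ, Continuous (F0 n) := by
    intro n
    have hlip : LipschitzWith (Real.toNNReal n) (F0 n) := by
      apply LipschitzWith.of_dist_le_mul
      intro a b
      rw [Real.dist_eq]
      have hn : (Real.toNNReal (n:ℝ) : ℝ) = (n : ℝ) := Real.coe_toNNReal _ (by positivity)
      rw [hn]
      rw [abs_sub_le_iff]
      constructor
      · have := hLip n a b; linarith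
      · have := hLip n b a; rw [dist_comm b a] at this; linarith
    exact hlip.continuous
  refine ⟨fun n => ⟨F0 n, hcont n⟩, fun n x => hle n x, fun m n h x => hmono m n h x, ?_⟩
  intro x
  simp only [ContinuousMap.coe_mk]
  rw [tendsto_order]
  constructor
  · intro a ha
    set a' : ℝ := (a + g x) / 2 with ha'
    have haa' : a < a' := by rw [ha']; linarith
    have ha'g : a' < g x := by rw [ha']; linarith
    have hev := hlsc x a' ha'g
    rw [Metric.eventually_nhds_iff] at hev
    obtain ⟨δ, hδ, hball⟩ := hev
    set N : ℕ := ⌈(a + C) / δ⌉₊ + 1 with hN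
    rw [Filter.eventually_atTop]
    refine ⟨N, fun n hn => ?_⟩
    have hNn : (N : ℝ) ≤ (n : ℝ) := by exact_mod_cast hn
    have hNδ : a < -C + (n : ℝ) * δ := by
      have h1 : (a + C) / δ ≤ (⌈(a + C) / δ⌉₊ : ℝ) := Nat.le_ceil _
      have h2 : ((⌈(a + C) / δ⌉₊ : ℝ)) + 1 = (N : ℝ) := by rw [hN]; push_cast; ring
      have h3 : (a + C) / δ < (N : ℝ) := by linarith
      have h4 : a + C < (N : ℝ) * δ := by
        rw [div_lt_iff₀ hδ] at h3; linarith
      nlinarith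
    have hbound : min a' (-C + (n:ℝ) * δ) ≤ F0 n x := by
      refine le_ciInf fun z => ?_
      rcases lt_or_ge (dist z x) δ with hz | hz
      · have := hball hz
        have h0 : (0:ℝ) ≤ (n : ℝ) * dist x z := by positivity
        calc min a' (-C + (n:ℝ) * δ) ≤ a' := min_le_left _ _
          _ ≤ g z + n * dist x z := by linarith
      · have h0 : (n:ℝ) * δ ≤ (n:ℝ) * dist x z := by
          apply mul_le_mul_of_nonneg_left _ (by positivity)
          rw [dist_comm]; exact hz
        calc min a' (-C + (n:ℝ) * δ) ≤ -C + (n:ℝ) * δ := min_le_right _ _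
          _ ≤ g z + n * dist x z := by linarith [hgC z]
    have : a < min a' (-C + (n:ℝ) * δ) := lt_min haa' hNδ
    linarith
  · intro b hb'
    apply Filter.Eventually.of_forall
    intro n
    exact lt_of_le_of_lt (hle n x) hb'

end ApproxAux

namespace EnvAux

variable {k : ℕ} {G : ConeField k}

lemma const_mem (c : ℝ) : (fun _ : Ck k => c) ∈ PGamma G := by
  refine ⟨contDiff_const, fun z ξ _ => ?_⟩
  have h2 : iteratedFDeriv ℝ 2 (fun _ : Ck k => c) z = 0 :=
    congrFun (iteratedFDeriv_const_of_ne (by norm_num) c) z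
  simp [Levi, h2]

lemma add_mem {u v : Ck k → ℝ} (hu : u ∈ PGamma G) (hv : v ∈ PGamma G) :
    (u + v) ∈ PGamma G := by
  obtain ⟨hu1, hu2⟩ := hu
  obtain ⟨hv1, hv2⟩ := hv
  have hu1' : ContDiff ℝ (2 : ℕ) u := hu1
  have hv1' : ContDiff ℝ (2 : ℕ) v := hv1
  refine ⟨hu1.add hv1, fun z ξ hξ => ?_⟩
  have hL : Levi (u + v) z ξ = Levi u z ξ + Levi v z ξ := by
    simp only [Levi, iteratedFDeriv_add_apply hu1'.contDiffAt hv1'.contDiffAt, ContinuousMultilinearMap.add_apply]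
    ring
  rw [hL]
  exact add_nonneg (hu2 z ξ hξ) (hv2 z ξ hξ)

lemma smul_mem {u : Ck k → ℝ} (hu : u ∈ PGamma G) {c : ℝ} (hc : 0 ≤ c) :
    (c • u) ∈ PGamma G := by
  obtain ⟨hu1, hu2⟩ := hu
  have hu1' : ContDiff ℝ (2 : ℕ) u := hu1
  refine ⟨hu1.const_smul c, fun z ξ hξ => ?_⟩
  have hL : Levi (c • u) z ξ = c * Levi u z ξ := by
    simp only [Levi, iteratedFDeriv_const_smul_apply hu1'.contDiffAt,
      ContinuousMultilinearMap.smul_apply, smul_eq_mul]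
    ring
  rw [hL]
  exact mul_nonneg hc (hu2 z ξ hξ)

variable (G) in
/-- Candidate values for the envelope. -/
def cand (K : Set (Ck k)) (x : Ck k) (f : C(↥K, ℝ)) : Set ℝ :=
  {t | ∃ v ∈ PGamma G, (∀ w : ↥K, v w ≤ f w) ∧ t = v x}

variable (G) in
def env (K : Set (Ck k)) (x : Ck k) (f : C(↥K, ℝ)) : ℝ := sSup (cand G K x f)

variable {K : Set (Ck k)} {x : Ck k}

lemma const_mem_cand {f : C(↥K, ℝ)} {b : ℝ} (hb : ∀ w : ↥K, b ≤ f w) :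
    b ∈ cand G K x f :=
  ⟨fun _ => b, const_mem b, hb, rfl⟩

lemma cand_le (hKne : K.Nonempty) (hx : x ∈ gammaHull G K) {f : C(↥K, ℝ)} {B : ℝ}
    (hB : ∀ w : ↥K, f w ≤ B) {t : ℝ} (ht : t ∈ cand G K x f) : t ≤ B := by
  obtain ⟨v, hv, hvf, rfl⟩ := ht
  have h1 : v x ≤ sSup (v '' K) := hx v hv
  have h2 : sSup (v '' K) ≤ B := by
    refine csSup_le (hKne.image v) ?_
    rintro y ⟨w, hw, rfl⟩
    exact le_trans (hvf ⟨w, hw⟩) (hB ⟨w, hw⟩)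
  exact le_trans h1 h2

lemma cand_bddAbove (hKne : K.Nonempty) (hx : x ∈ gammaHull G K) [CompactSpace ↥K]
    (f : C(↥K, ℝ)) : BddAbove (cand G K x f) :=
  ⟨‖f‖, fun t ht => cand_le hKne hx
    (fun w => le_trans (le_abs_self _) (f.norm_coe_le_norm w)) ht⟩

lemma cand_nonempty [CompactSpace ↥K] (f : C(↥K, ℝ)) : (cand G K x f).Nonempty :=
  ⟨-‖f‖, const_mem_cand (fun w => by
    have := f.norm_coe_le_norm w
    have := neg_abs_le (f w)
    simp only [Real.norm_eq_abs] at *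
    linarith)⟩

variable (hKne : K.Nonempty) (hx : x ∈ gammaHull G K) [CompactSpace ↥K]
include hKne hx

lemma le_env {f : C(↥K, ℝ)} {t : ℝ} (ht : t ∈ cand G K x f) : t ≤ env G K x f :=
  le_csSup (cand_bddAbove hKne hx f) ht

lemma env_le {f : C(↥K, ℝ)} {B : ℝ} (hB : ∀ w : ↥K, f w ≤ B) : env G K x f ≤ B :=
  csSup_le (cand_nonempty f) (fun t ht => cand_le hKne hx hB ht)

lemma env_nonneg {f : C(↥K, ℝ)} (hf : ∀ w, 0 ≤ f w) : 0 ≤ env G K x f :=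
  le_env hKne hx (const_mem_cand hf)

lemma env_zero : env G K x 0 = 0 :=
  le_antisymm (env_le hKne hx (fun w => by simp))
    (env_nonneg hKne hx (fun w => by simp))

lemma env_mono {f g : C(↥K, ℝ)} (h : ∀ w, f w ≤ g w) : env G K x f ≤ env G K x g := by
  apply csSup_le_csSup (cand_bddAbove hKne hx g) (cand_nonempty f)
  rintro t ⟨v, hv, hvf, rfl⟩
  exact ⟨v, hv, fun w => le_trans (hvf w) (h w), rfl⟩

lemma env_superadd (f g : C(↥K, ℝ)) :
    env G K x f + env G K x g ≤ env G K x (f + g) := by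
  have hmain : env G K x f ≤ env G K x (f + g) - env G K x g := by
    refine csSup_le (cand_nonempty f) ?_
    rintro t ⟨v, hv, hvf, rfl⟩
    have h1 : env G K x g ≤ env G K x (f + g) - v x := by
      refine csSup_le (cand_nonempty g) ?_
      rintro s ⟨w, hw, hwg, rfl⟩
      have : v x + w x ≤ env G K x (f + g) := by
        refine le_env hKne hx ⟨v + w, add_mem hv hw, fun p => ?_, rfl⟩
        simp only [Pi.add_apply, ContinuousMap.add_apply]
        exact add_le_add (hvf p) (hwg p)
      linarith
    linarith
  linarith

lemma env_smul {c : ℝ} (hc : 0 < c) (f : C(↥K, ℝ)) :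
    env G K x (c • f) = c * env G K x f := by
  apply le_antisymm
  · refine csSup_le (cand_nonempty _) ?_
    rintro t ⟨v, hv, hvf, rfl⟩
    have hmem : c⁻¹ * v x ∈ cand G K x f := by
      refine ⟨c⁻¹ • v, smul_mem hv (inv_nonneg.2 hc.le), fun w => ?_, by simp⟩
      have := hvf w
      simp only [Pi.smul_apply, smul_eq_mul, ContinuousMap.smul_apply] at *
      calc c⁻¹ * v w ≤ c⁻¹ * (c * f w) :=
            mul_le_mul_of_nonneg_left this (inv_nonneg.2 hc.le)
        _ = f w := by field_simp
    have := le_env hKne hx hmem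
    calc v x = c * (c⁻¹ * v x) := by field_simp
      _ ≤ c * env G K x f := mul_le_mul_of_nonneg_left this hc.le
  · rw [← le_div_iff₀' hc]
    refine csSup_le (cand_nonempty _) ?_
    rintro t ⟨v, hv, hvf, rfl⟩
    rw [le_div_iff₀' hc]
    refine le_env hKne hx ⟨c • v, smul_mem hv hc.le, fun w => ?_, by simp⟩
    have := hvf w
    simp only [Pi.smul_apply, smul_eq_mul, ContinuousMap.smul_apply] at *
    exact mul_le_mul_of_nonneg_left this hc.le

lemma env_neg_smul {c : ℝ} (f : C(↥K, ℝ)) :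
    env G K x (c • f) ≤ c * env G K x f := by
  rcases lt_trichotomy c 0 with hc | hc | hc
  · have hpos : (0:ℝ) < -c := by linarith
    have h1 := env_superadd hKne hx (c • f) ((-c) • f)
    have h2 : c • f + (-c) • f = 0 := by ext w; simp
    rw [h2, env_zero hKne hx, env_smul hKne hx hpos] at h1
    linarith
  · subst hc; rw [zero_smul, env_zero hKne hx, zero_mul]
  · exact (env_smul hKne hx hc f).le

lemma exists_functional_ne (f₀ : C(↥K, ℝ)) (hf₀ : f₀ ≠ 0) :
    ∃ φ : C(↥K, ℝ) →ₗ[ℝ] ℝ, (∀ f, env G K x f ≤ φ f) ∧ φ f₀ = env G K x f₀ := by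
  set N : C(↥K, ℝ) → ℝ := fun f => -env G K x f with hN
  have hN_hom : ∀ c : ℝ, 0 < c → ∀ f, N (c • f) = c * N f := by
    intro c hc f
    simp only [hN, env_smul hKne hx hc]
    ring
  have hN_add : ∀ f g, N (f + g) ≤ N f + N g := by
    intro f g
    have := env_superadd hKne hx f g
    simp only [hN]
    linarith
  set pm : C(↥K, ℝ) →ₗ.[ℝ] ℝ :=
    LinearPMap.mkSpanSingleton f₀ (-env G K x f₀) hf₀ with hpm
  have hdom : ∀ p : pm.domain, pm p ≤ N p := by
    rintro ⟨p, hp⟩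
    obtain ⟨c, hc⟩ := Submodule.mem_span_singleton.1 hp
    have hval : pm ⟨p, hp⟩ = c * (-env G K x f₀) := by
      have heq : (⟨p, hp⟩ : pm.domain) = ⟨c • f₀, hc ▸ hp⟩ := Subtype.ext hc.symm
      rw [heq]
      have happ := LinearPMap.mkSpanSingleton'_apply f₀ (-env G K x f₀)
        (fun c' hc' => (smul_eq_zero.1 hc').elim
          (fun h => by rw [h, map_zero, zero_smul]) (fun h => absurd h hf₀)) c (hc ▸ hp)
      calc (pm ⟨c • f₀, hc ▸ hp⟩ : ℝ) = c • (-env G K x f₀) := happ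
        _ = c * (-env G K x f₀) := smul_eq_mul _ _
    rw [hval]
    have hle : env G K x (c • f₀) ≤ c * env G K x f₀ := env_neg_smul hKne hx f₀
    have : N p = -env G K x (c • f₀) := by rw [hN, ← hc]
    rw [this]
    linarith
  obtain ⟨g, hg_ext, hg_le⟩ := exists_extension_of_le_sublinear pm N hN_hom hN_add hdom
  refine ⟨-g, fun f => ?_, ?_⟩
  · have := hg_le f
    simp only [hN] at this
    simp only [LinearMap.neg_apply]
    linarith
  · have hmem : f₀ ∈ pm.domain := Submodule.mem_span_singleton_self f₀
    have h1 := hg_ext ⟨f₀, hmem⟩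
    have h2 : pm ⟨f₀, hmem⟩ = -env G K x f₀ := LinearPMap.mkSpanSingleton_apply ℝ ℝ hf₀ _
    simp only [LinearMap.neg_apply]
    rw [h1, h2]
    ring

lemma exists_functional (f₀ : C(↥K, ℝ)) :
    ∃ φ : C(↥K, ℝ) →ₗ[ℝ] ℝ, (∀ f, env G K x f ≤ φ f) ∧ φ f₀ = env G K x f₀ := by
  by_cases hf₀ : f₀ = 0
  · have hone : (1 : C(↥K, ℝ)) ≠ 0 := by
      intro h
      obtain ⟨w, hw⟩ := hKne
      have := ContinuousMap.congr_fun h ⟨w, hw⟩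
      simp at this
    obtain ⟨φ, hφ1, _⟩ := exists_functional_ne hKne hx 1 hone
    refine ⟨φ, hφ1, ?_⟩
    rw [hf₀, map_zero, env_zero hKne hx]
  · exact exists_functional_ne hKne hx f₀ hf₀

end EnvAux

/-- (The envelope identities of Section 4.)  If every point of `K` is a
Jensen boundary point for `P_Γ`, then the `Γ`-Monge–Ampère envelope `û_Γ` of a
bounded lsc function `u` on `K` agrees with `u` on `K`, and at every point of
`K̂_Γ` it is the infimum of `∫ u dμ` over Jensen measures `μ` supported on `K`. -/
theorem gamma_monge_ampere_envelope {k : ℕ} (hk : 1 ≤ k)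
    (G : ConeField k) (K : Set (Ck k)) (hK : IsCompact K) (hKne : K.Nonempty)
    (hJensenBd : ∀ x ∈ K, ∀ μ : Measure (Ck k),
      IsJensenMeasure (PGamma G) K x μ → μ = Measure.dirac x)
    (u : Ck k → ℝ)
    (hbd : ∃ C : ℝ, ∀ x ∈ K, |u x| ≤ C)
    (hlsc : LowerSemicontinuousOn u K)
    (uhat : Ck k → ℝ)
    (huhat : ∀ x : Ck k,
      uhat x = sSup {t : ℝ | ∃ v ∈ PGamma G, (∀ w ∈ K, v w ≤ u w) ∧ t = v x}) :
    (∀ x ∈ K, uhat x = u x) ∧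
    ∀ x ∈ gammaHull G K,
      (∃ μ : Measure (Ck k), IsJensenMeasure (PGamma G) K x μ) ∧
      uhat x = sInf {t : ℝ | ∃ μ : Measure (Ck k),
        IsJensenMeasure (PGamma G) K x μ ∧ t = ∫ z, u z ∂μ} := by
  classical
  obtain ⟨C₀, hC₀⟩ := hbd
  set C : ℝ := |C₀| + 1 with hCdef
  have hC : ∀ w ∈ K, |u w| ≤ C := fun w hw =>
    le_trans (hC₀ w hw) (by rw [hCdef]; linarith [le_abs_self C₀])
  have hC0 : (0:ℝ) ≤ C := by rw [hCdef]; positivity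
  haveI : CompactSpace ↥K := isCompact_iff_compactSpace.mp hK
  haveI : Nonempty ↥K := hKne.to_subtype
  have hKclosed : IsClosed K := hK.isClosed
  have hKmeas : MeasurableSet K := hKclosed.measurableSet
  -- the restriction of u to K
  set g : ↥K → ℝ := fun w => u w with hgdef
  have hg_lsc : LowerSemicontinuous g := by
    intro w t ht
    have h1 := hlsc w.1 w.2 t ht
    rw [nhdsWithin_eq_map_subtype_coe w.2, Filter.eventually_map] at h1
    exact h1
  have hg_meas : Measurable g := hg_lsc.measurable
  have hg_b : ∀ w : ↥K, |g w| ≤ C := fun w => hC w.1 w.2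
  -- the measurable extension of u
  set utld : Ck k → ℝ := Function.extend Subtype.val g (fun _ => 0) with hutld
  have hutld_meas : Measurable utld :=
    (MeasurableEmbedding.subtype_coe hKmeas).measurable_extend hg_meas measurable_const
  have hutld_eqK : ∀ w : ↥K, utld w.1 = u w.1 := by
    intro w
    rw [hutld]
    have := Subtype.val_injective.extend_apply g (fun _ => (0:ℝ)) w
    rw [this]
  have hutld_b : ∀ z, |utld z| ≤ C := by
    intro z
    by_cases hz : z ∈ K
    · rw [show z = (⟨z, hz⟩ : ↥K).1 from rfl, hutld_eqK ⟨z, hz⟩]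
      exact hC z hz
    · have : utld z = 0 := by
        rw [hutld]
        apply Function.extend_apply'
        rintro ⟨w, rfl⟩
        exact hz w.2
      rw [this]; simpa using hC0
  have hu_ae : ∀ μ : Measure (Ck k), μ Kᶜ = 0 → u =ᵐ[μ] utld := by
    intro μ hμK
    refine Filter.eventuallyEq_of_mem (?_ : Kᶜᶜ ∈ _) ?_
    · rw [MeasureTheory.mem_ae_iff, compl_compl]; exact hμK
    · intro z hz
      rw [compl_compl] at hz
      exact (hutld_eqK ⟨z, hz⟩).symm
  -- the upper bound: every Jensen measure dominates uhat
  have upper : ∀ x : Ck k, ∀ μ : Measure (Ck k),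
      IsJensenMeasure (PGamma G) K x μ → uhat x ≤ ∫ z, u z ∂μ := by
    intro x μ hJ
    obtain ⟨hprob, hμK, hJ3⟩ := hJ
    haveI := hprob
    have hKae : ∀ᵐ z ∂μ, z ∈ K := by
      rw [MeasureTheory.ae_iff]
      exact hμK
    have huint : MeasureTheory.Integrable u μ := by
      have h1 : MeasureTheory.Integrable utld μ :=
        MeasureTheory.Integrable.mono' (MeasureTheory.integrable_const C)
          hutld_meas.aestronglyMeasurable
          (Filter.Eventually.of_forall fun z => by
            simpa [Real.norm_eq_abs] using hutld_b z)
      exact h1.congr (hu_ae μ hμK).symm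
    rw [huhat x]
    refine csSup_le ⟨-C, fun _ => -C, EnvAux.const_mem (-C),
      fun w hw => by simpa using neg_le_of_abs_le (hC w hw), rfl⟩ ?_
    rintro t ⟨v, hv, hvu, rfl⟩
    have h1 : v x ≤ ∫ z, v z ∂μ := hJ3 v hv
    obtain ⟨Cv, hCv⟩ : ∃ Cv, ∀ w ∈ K, ‖v w‖ ≤ Cv := by
      obtain ⟨Cv, hCv⟩ := hK.exists_bound_of_continuousOn (hv.1.continuous.continuousOn)
      exact ⟨Cv, hCv⟩
    have hvint : MeasureTheory.Integrable v μ :=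
      MeasureTheory.Integrable.mono' (MeasureTheory.integrable_const Cv)
        hv.1.continuous.aestronglyMeasurable
        (hKae.mono fun z hz => hCv z hz)
    have h2 : ∫ z, v z ∂μ ≤ ∫ z, u z ∂μ :=
      MeasureTheory.integral_mono_ae hvint huint (hKae.mono fun z hz => hvu z hz)
    exact le_trans h1 h2
  -- bddAbove of the uhat candidate set (needed at hull points)
  -- the main construction of a minimizing Jensen measure
  have main : ∀ x ∈ gammaHull G K, ∃ μ : Measure (Ck k),
      IsJensenMeasure (PGamma G) K x μ ∧ ∫ z, u z ∂μ ≤ uhat x := by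
    intro x hx
    obtain ⟨F, hFle, hFmono, hFtend⟩ := ApproxAux.exists_approx g hg_lsc hg_b
    -- the envelope of each F n is at most uhat x
    have hUbdd : BddAbove {t : ℝ | ∃ v ∈ PGamma G, (∀ w ∈ K, v w ≤ u w) ∧ t = v x} := by
      refine ⟨C, ?_⟩
      rintro t ⟨v, hv, hvu, rfl⟩
      have h1 : v x ≤ sSup (v '' K) := hx v hv
      have h2 : sSup (v '' K) ≤ C := by
        refine csSup_le (hKne.image v) ?_
        rintro y ⟨w, hw, rfl⟩
        exact le_trans (hvu w hw) (le_of_abs_le (hC w hw))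
      exact le_trans h1 h2
    have hEnvU : ∀ n : ℕ, EnvAux.env G K x (F n) ≤ uhat x := by
      intro n
      rw [huhat x]
      refine csSup_le (EnvAux.cand_nonempty (F n)) ?_
      rintro t ⟨v, hv, hvf, rfl⟩
      refine le_csSup hUbdd ⟨v, hv, fun w hw => ?_, rfl⟩
      exact le_trans (hvf ⟨w, hw⟩) (hFle n ⟨w, hw⟩)
    -- the Hahn-Banach functionals
    have hfun : ∀ n : ℕ, ∃ φ : C(↥K, ℝ) →ₗ[ℝ] ℝ,
        (∀ f, EnvAux.env G K x f ≤ φ f) ∧ φ (F n) = EnvAux.env G K x (F n) :=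
      fun n => EnvAux.exists_functional hKne hx (F n)
    choose φseq hφ1 hφ2 using hfun
    have hEnorm : ∀ (f : C(↥K, ℝ)), -‖f‖ ≤ EnvAux.env G K x f := by
      intro f
      refine EnvAux.le_env hKne hx (EnvAux.const_mem_cand fun w => ?_)
      have h1 := f.norm_coe_le_norm w
      have h2 := neg_abs_le (f w)
      simp only [Real.norm_eq_abs] at h1
      linarith
    have hφbound : ∀ n (f : C(↥K, ℝ)), |φseq n f| ≤ ‖f‖ := by
      intro n f
      rw [abs_le]
      constructor
      · linarith [le_trans (hEnorm f) (hφ1 n f)]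
      · have h1 := le_trans (hEnorm (-f)) (hφ1 n (-f))
        rw [map_neg, norm_neg] at h1
        linarith
    have hφpos : ∀ n (f : C(↥K, ℝ)), (∀ w, 0 ≤ f w) → 0 ≤ φseq n f := by
      intro n f hf
      refine le_trans ?_ (hφ1 n f)
      exact EnvAux.env_nonneg hKne hx hf
    have hφmono : ∀ n (f f' : C(↥K, ℝ)), (∀ w, f w ≤ f' w) → φseq n f ≤ φseq n f' := by
      intro n f f' hff
      have h0 : 0 ≤ φseq n (f' - f) := hφpos n _ (fun w => by
        simp only [ContinuousMap.sub_apply]; linarith [hff w])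
      rw [map_sub] at h0
      linarith
    have hφone : ∀ n, φseq n 1 = 1 := by
      intro n
      have h1 : (1:ℝ) ≤ φseq n 1 := by
        refine le_trans ?_ (hφ1 n 1)
        refine EnvAux.le_env hKne hx (EnvAux.const_mem_cand fun w => by simp)
      have h2 : φseq n (-1) ≥ -1 := by
        refine le_trans ?_ (hφ1 n (-1))
        refine EnvAux.le_env hKne hx (EnvAux.const_mem_cand fun w => by simp)
      rw [map_neg] at h2
      linarith
    -- pass to weak-* continuous functionals
    have hφnorm : ∀ n (f : C(↥K, ℝ)), ‖φseq n f‖ ≤ 1 * ‖f‖ := fun n f => by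
      rw [one_mul]
      simpa [Real.norm_eq_abs] using hφbound n f
    set D : ℕ → StrongDual ℝ C(↥K, ℝ) := fun n =>
      LinearMap.mkContinuous (φseq n) 1 (hφnorm n) with hDdef
    set ψ : ℕ → WeakDual ℝ C(↥K, ℝ) := fun n =>
      StrongDual.toWeakDual (D n) with hψdef
    have hψapp : ∀ n f, ψ n f = φseq n f := fun n f => rfl
    set S : Set (WeakDual ℝ C(↥K, ℝ)) :=
      WeakDual.toStrongDual ⁻¹' Metric.closedBall (0 : StrongDual ℝ C(↥K, ℝ)) 1 with hSdef
    have hScompact : IsCompact S :=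
      WeakDual.isCompact_closedBall (0 : StrongDual ℝ C(↥K, ℝ)) 1
    have hψS : ∀ n, ψ n ∈ S := by
      intro n
      simp only [hSdef, Set.mem_preimage, mem_closedBall_zero_iff]
      show D n ∈ Metric.closedBall (0 : StrongDual ℝ C(↥K, ℝ)) 1
      refine (mem_closedBall_zero_iff (E := StrongDual ℝ C(↥K, ℝ)) (a := D n)).2 ?_
      rw [hDdef]
      exact LinearMap.mkContinuous_norm_le _ zero_le_one _
    have hneS : Filter.map ψ Filter.atTop ≤ Filter.principal S :=
      Filter.le_principal_iff.2 (Filter.eventually_atTop.2 ⟨0, fun n _ => hψS n⟩)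
    obtain ⟨L, _, hLcluster⟩ := hScompact.exists_clusterPt hneS
    have hclosed_mem : ∀ T : Set (WeakDual ℝ C(↥K, ℝ)), IsClosed T →
        (∀ᶠ n in Filter.atTop, ψ n ∈ T) → L ∈ T := by
      intro T hT hev
      have hTmem : T ∈ Filter.map ψ Filter.atTop := hev
      have h1 : ClusterPt L (Filter.principal T) :=
        hLcluster.mono (Filter.le_principal_iff.2 hTmem)
      exact hT.closure_subset (mem_closure_iff_clusterPt.2 h1)
    -- constraints satisfied by the cluster point
    have hL1 : L 1 = 1 := by
      refine hclosed_mem {φ | φ 1 = 1}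
        (isClosed_eq (WeakDual.eval_continuous 1) continuous_const) ?_
      exact Filter.Eventually.of_forall fun n => by
        simp only [Set.mem_setOf_eq, hψapp, hφone n]
    have hLpos : ∀ f : C(↥K, ℝ), (∀ w, 0 ≤ f w) → 0 ≤ L f := by
      intro f hf
      refine hclosed_mem {φ | 0 ≤ φ f}
        (isClosed_le continuous_const (WeakDual.eval_continuous f)) ?_
      exact Filter.Eventually.of_forall fun n => by
        simp only [Set.mem_setOf_eq, hψapp]
        exact hφpos n f hf
    have hLF : ∀ m : ℕ, L (F m) ≤ uhat x := by
      intro m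
      refine hclosed_mem {φ | φ (F m) ≤ uhat x}
        (isClosed_le (WeakDual.eval_continuous (F m)) continuous_const) ?_
      rw [Filter.eventually_atTop]
      refine ⟨m, fun n hn => ?_⟩
      simp only [Set.mem_setOf_eq, hψapp]
      calc φseq n (F m) ≤ φseq n (F n) := hφmono n _ _ (fun w => hFmono m n hn w)
        _ = EnvAux.env G K x (F n) := hφ2 n
        _ ≤ uhat x := hEnvU n
    have hLP : ∀ (v : Ck k → ℝ) (hv : v ∈ PGamma G),
        v x ≤ L ⟨fun w : ↥K => v w, hv.1.continuous.comp continuous_subtype_val⟩ := by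
      intro v hv
      refine hclosed_mem {φ | v x ≤ φ ⟨fun w : ↥K => v w,
        hv.1.continuous.comp continuous_subtype_val⟩}
        (isClosed_le continuous_const (WeakDual.eval_continuous _)) ?_
      refine Filter.Eventually.of_forall fun n => ?_
      simp only [Set.mem_setOf_eq, hψapp]
      refine le_trans ?_ (hφ1 n _)
      exact EnvAux.le_env hKne hx ⟨v, hv, fun w => le_refl _, rfl⟩
    -- the Riesz representation of L
    set LL : C(↥K, ℝ) →ₗ[ℝ] ℝ := (WeakDual.toStrongDual L : C(↥K, ℝ) →L[ℝ] ℝ).toLinearMap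
      with hLLdef
    have hLLapp : ∀ f, LL f = L f := fun f => rfl
    have hLLpos : ∀ f : C(↥K, ℝ), (∀ w, 0 ≤ f w) → 0 ≤ LL f := by
      intro f hf; rw [hLLapp]; exact hLpos f hf
    obtain ⟨μX, hμX_univ, hμX_int⟩ := RMKaux.rmk_exists LL hLLpos
    rw [hLLapp, hL1, ENNReal.ofReal_one] at hμX_univ
    haveI hμX_prob : IsProbabilityMeasure μX := ⟨hμX_univ⟩
    set μ : Measure (Ck k) := μX.map Subtype.val with hμdef
    have hval_meas : Measurable (Subtype.val : ↥K → Ck k) := measurable_subtype_coe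
    haveI hprob : IsProbabilityMeasure μ := Measure.isProbabilityMeasure_map hval_meas.aemeasurable
    have hμKc : μ Kᶜ = 0 := by
      rw [hμdef, Measure.map_apply hval_meas hKmeas.compl]
      have : (Subtype.val : ↥K → Ck k) ⁻¹' Kᶜ = ∅ := by
        ext w; simp [w.2]
      rw [this, measure_empty]
    have hJensen : ∀ v ∈ PGamma G, v x ≤ ∫ z, v z ∂μ := by
      intro v hv
      have h1 : ∫ z, v z ∂μ = ∫ w, v w.1 ∂μX := by
        rw [hμdef]
        exact integral_map hval_meas.aemeasurable
          (hv.1.continuous.aestronglyMeasurable)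
      rw [h1]
      have h2 : ∫ w, v w.1 ∂μX
          = LL ⟨fun w : ↥K => v w, hv.1.continuous.comp continuous_subtype_val⟩ := by
        rw [← hμX_int ⟨fun w : ↥K => v w, hv.1.continuous.comp continuous_subtype_val⟩]
        rfl
      rw [h2, hLLapp]
      exact hLP v hv
    refine ⟨μ, ⟨hprob, hμKc, hJensen⟩, ?_⟩
    -- the value of the integral
    have hmap : ∫ z, u z ∂μ = ∫ w, g w ∂μX := by
      have h1 : ∫ z, u z ∂μ = ∫ z, utld z ∂μ := integral_congr_ae (hu_ae μ hμKc)
      have h2 : ∫ z, utld z ∂μ = ∫ w, utld w.1 ∂μX := by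
        rw [hμdef]
        exact integral_map hval_meas.aemeasurable hutld_meas.aestronglyMeasurable
      have h3 : ∫ w, utld w.1 ∂μX = ∫ w, g w ∂μX := by
        apply integral_congr_ae
        apply Filter.Eventually.of_forall
        intro w
        exact hutld_eqK w
      rw [h1, h2, h3]
    rw [hmap]
    -- monotone convergence
    have hFint : ∀ m : ℕ, Integrable (fun w => F m w) μX := fun m => RMKaux.cm_integrable μX (F m)
    have hgint : Integrable g μX :=
      Integrable.mono' (integrable_const C) hg_meas.aestronglyMeasurable
        (Filter.Eventually.of_forall fun w => by
          simpa [Real.norm_eq_abs] using hg_b w)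
    have htend : Filter.Tendsto (fun m => ∫ w, F m w ∂μX) Filter.atTop
        (nhds (∫ w, g w ∂μX)) := by
      apply integral_tendsto_of_tendsto_of_monotone hFint hgint
      · exact Filter.Eventually.of_forall fun w m n hmn => hFmono m n hmn w
      · exact Filter.Eventually.of_forall fun w => hFtend w
    refine le_of_tendsto' htend fun m => ?_
    rw [hμX_int (F m), hLLapp]
    exact hLF m
  -- assemble the two parts
  have hsub : K ⊆ gammaHull G K := by
    intro z hz v hv
    exact le_csSup (hK.bddAbove_image hv.1.continuous.continuousOn) ⟨z, hz, rfl⟩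
  constructor
  · intro x hx
    obtain ⟨μ, hJ, hle⟩ := main x (hsub hx)
    have hdirac := hJensenBd x hx μ hJ
    rw [hdirac] at hle
    have hae : u =ᵐ[Measure.dirac x] (fun _ => u x) := by
      have hsub0 : {z | ¬ u z = u x} ⊆ {x}ᶜ := by
        intro z hz
        simp only [Set.mem_setOf_eq] at hz
        simp only [Set.mem_compl_iff, Set.mem_singleton_iff]
        rintro rfl
        exact hz rfl
      have h0 : Measure.dirac x ({x}ᶜ) = 0 := by
        rw [Measure.dirac_apply' _ (measurableSet_singleton x).compl]
        simp
      exact measure_mono_null hsub0 h0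
    have hint : ∫ z, u z ∂(Measure.dirac x) = u x := by
      rw [integral_congr_ae hae]
      simp
    rw [hint] at hle
    -- also uhat x ≤ u x
    have hle2 : uhat x ≤ u x := by
      rw [huhat x]
      refine csSup_le ⟨-C, fun _ => -C, EnvAux.const_mem (-C),
        fun w hw => by simpa using neg_le_of_abs_le (hC w hw), rfl⟩ ?_
      rintro t ⟨v, hv, hvu, rfl⟩
      exact hvu x hx
    linarith
  · intro x hx
    obtain ⟨μs, hJs, hles⟩ := main x hx
    refine ⟨⟨μs, hJs⟩, ?_⟩
    apply le_antisymm
    · refine le_csInf ⟨∫ z, u z ∂μs, μs, hJs, rfl⟩ ?_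
      rintro t ⟨μ, hJ, rfl⟩
      exact upper x μ hJ
    · refine le_trans (csInf_le ⟨uhat x, ?_⟩ ⟨μs, hJs, rfl⟩) hles
      rintro t ⟨μ, hJ, rfl⟩
      exact upper x μ hJ
end
end

section
/- Let ρ : ℂᵏ → ℝ (k ≥ 1) be a C² function whose Levi form is positive definite at every point, i.e. L(ρ,z,ξ) > 0 for every z ∈ ℂᵏ and every nonzero ξ ∈ ℂᵏ. Let φ : D → ℂᵏ be holomorphic on the open unit disc D and tangent to the kernel of ∂ρ, meaning that for every ζ ∈ D the real derivative of ρ satisfies Dρ(φ(ζ))(φ'(ζ)) = 0 and Dρ(φ(ζ))(i·φ'(ζ)) = 0 (equivalently, ρ∘φ is constant on D). Then φ is constant. -/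
open Metric

noncomputable section

/-- (Example 3.15 of the paper.)  If `ρ` is `C²` and strictly plurisubharmonic
(its Levi form is positive definite everywhere), then every holomorphic disc
tangent to the distribution `ker ∂ρ` is constant. -/
theorem holomorphic_disc_tangent_ker_dbar_rho_const {k : ℕ} (hk : 1 ≤ k)
    (ρ : Ck k → ℝ) (hρ : ContDiff ℝ 2 ρ)
    (hstrict : ∀ z ξ : Ck k, ξ ≠ 0 → 0 < Levi ρ z ξ)
    (φ : ℂ → Ck k) (hφ : DifferentiableOn ℂ φ (ball (0 : ℂ) 1))
    (htangent : ∀ ζ ∈ ball (0 : ℂ) 1,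
      fderiv ℝ ρ (φ ζ) (deriv φ ζ) = 0 ∧
      fderiv ℝ ρ (φ ζ) ((Complex.I : ℂ) • deriv φ ζ) = 0) :
    ∀ ζ ∈ ball (0 : ℂ) 1, ∀ ζ' ∈ ball (0 : ℂ) 1, φ ζ = φ ζ' := by
  have hball : IsOpen (ball (0 : ℂ) 1) := isOpen_ball
  have hAd : Differentiable ℝ (fderiv ℝ ρ) :=
    (hρ.fderiv_right (m := 1) (by norm_num)).differentiable one_ne_zero
  have hψan := (hφ.analyticOnNhd hball).deriv
  -- real Fréchet derivative of a ℂ-differentiable function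
  have key : ∀ (g : ℂ → Ck k) (ζ : ℂ), DifferentiableAt ℂ g ζ → ∀ v : ℂ,
      fderiv ℝ g ζ v = v • deriv g ζ := by
    intro g ζ hg v
    have h2 : HasFDerivAt g (((1 : ℂ →L[ℂ] ℂ).smulRight (deriv g ζ)).restrictScalars ℝ) ζ :=
      (hg.hasDerivAt.hasFDerivAt).restrictScalars ℝ
    rw [h2.fderiv]; simp
  -- the derivative of φ vanishes on the ball
  have hderiv0 : ∀ ζ ∈ ball (0 : ℂ) 1, deriv φ ζ = 0 := by
    intro ζ0 hζ0
    by_contra hne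
    set z := φ ζ0 with hz
    set ξ := deriv φ ζ0 with hξ
    have hφζ : DifferentiableAt ℂ φ ζ0 := hφ.differentiableAt (hball.mem_nhds hζ0)
    have hψζ : DifferentiableAt ℂ (deriv φ) ζ0 := (hψan ζ0 hζ0).differentiableAt
    have hφR : DifferentiableAt ℝ φ ζ0 := hφζ.restrictScalars ℝ
    have hψR : DifferentiableAt ℝ (deriv φ) ζ0 := hψζ.restrictScalars ℝ
    set w := deriv (deriv φ) ζ0 with hw
    have hcd : DifferentiableAt ℝ (fun ζ => fderiv ℝ ρ (φ ζ)) ζ0 := (hAd (φ ζ0)).comp ζ0 hφR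
    have hcomp : fderiv ℝ (fun ζ => fderiv ℝ ρ (φ ζ)) ζ0
        = (fderiv ℝ (fderiv ℝ ρ) z).comp (fderiv ℝ φ ζ0) := by
      exact fderiv_comp ζ0 (hAd z) hφR
    -- first tangency condition, differentiated in direction 1
    have hF : fderiv ℝ (fun ζ => fderiv ℝ ρ (φ ζ) (deriv φ ζ)) ζ0 = 0 := by
      have heq : (fun ζ => fderiv ℝ ρ (φ ζ) (deriv φ ζ)) =ᶠ[nhds ζ0] fun _ => (0 : ℝ) := by
        filter_upwards [hball.mem_nhds hζ0] with ζ hζ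
        exact (htangent ζ hζ).1
      rw [heq.fderiv_eq]; exact fderiv_const_apply 0
    have hFc := fderiv_clm_apply hcd hψR
    have h1 : fderiv ℝ ρ z w + fderiv ℝ (fderiv ℝ ρ) z ξ ξ = 0 := by
      have e1 : (fderiv ℝ (fun ζ => fderiv ℝ ρ (φ ζ) (deriv φ ζ)) ζ0) 1 = 0 := by
        rw [hF]; rfl
      rw [hFc] at e1
      simp only [ContinuousLinearMap.add_apply, ContinuousLinearMap.comp_apply,
        ContinuousLinearMap.flip_apply, hcomp] at e1
      rw [key _ _ hψζ 1, key _ _ hφζ 1, one_smul, one_smul] at e1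
      exact e1
    -- second tangency condition, differentiated in direction I
    have hud : DifferentiableAt ℝ (fun ζ => (Complex.I : ℂ) • deriv φ ζ) ζ0 :=
      hψR.fun_const_smul _
    have huf : fderiv ℝ (fun ζ => (Complex.I : ℂ) • deriv φ ζ) ζ0
        = (Complex.I : ℂ) • fderiv ℝ (deriv φ) ζ0 := fderiv_fun_const_smul hψR _
    have hG : fderiv ℝ (fun ζ => fderiv ℝ ρ (φ ζ) ((Complex.I : ℂ) • deriv φ ζ)) ζ0 = 0 := by
      have heq : (fun ζ => fderiv ℝ ρ (φ ζ) ((Complex.I : ℂ) • deriv φ ζ))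
          =ᶠ[nhds ζ0] fun _ => (0 : ℝ) := by
        filter_upwards [hball.mem_nhds hζ0] with ζ hζ
        exact (htangent ζ hζ).2
      rw [heq.fderiv_eq]; exact fderiv_const_apply 0
    have hGc := fderiv_clm_apply hcd hud
    have h2 : -(fderiv ℝ ρ z w)
        + fderiv ℝ (fderiv ℝ ρ) z ((Complex.I : ℂ) • ξ) ((Complex.I : ℂ) • ξ) = 0 := by
      have e2 : (fderiv ℝ (fun ζ => fderiv ℝ ρ (φ ζ) ((Complex.I : ℂ) • deriv φ ζ)) ζ0)
          Complex.I = 0 := by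
        rw [hG]; rfl
      rw [hGc] at e2
      simp only [ContinuousLinearMap.add_apply, ContinuousLinearMap.comp_apply,
        ContinuousLinearMap.flip_apply, hcomp, huf, ContinuousLinearMap.smul_apply] at e2
      rw [key _ _ hψζ Complex.I, key _ _ hφζ Complex.I] at e2
      have : (Complex.I : ℂ) • (Complex.I : ℂ) • w = -w := by
        rw [smul_smul, Complex.I_mul_I, neg_one_smul]
      rw [this, map_neg] at e2
      exact e2
    have hsum : fderiv ℝ (fderiv ℝ ρ) z ξ ξ
        + fderiv ℝ (fderiv ℝ ρ) z ((Complex.I : ℂ) • ξ) ((Complex.I : ℂ) • ξ) = 0 := by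
      linarith
    have hL : Levi ρ z ξ = 0 := by
      unfold Levi
      rw [iteratedFDeriv_two_apply, iteratedFDeriv_two_apply]
      simp only [Matrix.cons_val_zero, Matrix.cons_val_one, Matrix.head_cons]
      rw [hsum]; ring
    exact absurd hL (ne_of_gt (hstrict z ξ hne))
  -- conclude that φ is constant on the ball
  have hφR' : DifferentiableOn ℝ φ (ball (0 : ℂ) 1) :=
    fun ζ hζ => (hφ ζ hζ).restrictScalars ℝ
  have hfd : ∀ ζ ∈ ball (0 : ℂ) 1, fderivWithin ℝ φ (ball (0 : ℂ) 1) ζ = 0 := by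
    intro ζ hζ
    have hφζ : DifferentiableAt ℂ φ ζ := hφ.differentiableAt (hball.mem_nhds hζ)
    have h0 : fderiv ℝ φ ζ = 0 := by
      ext v
      rw [key φ ζ hφζ v, hderiv0 ζ hζ, smul_zero]
      rfl
    rw [fderivWithin_of_isOpen hball hζ, h0]
  intro ζ hζ ζ' hζ'
  exact (convex_ball (0 : ℂ) 1).is_const_of_fderivWithin_eq_zero hφR' hfd hζ hζ'
end
end

section
/- Let k ≥ 2 and let α₁, …, α_m : ℂᵏ → Homℂ(ℂᵏ, ℂ) be continuous maps into the space of ℂ-linear functionals on ℂᵏ, with 1 ≤ m ≤ k − 1, and for z ∈ ℂᵏ set Γ_z := ⋂_{j=1}^m ker α_j(z), a complex subspace of dimension at least 1. Let u : ℂᵏ → ℝ be a C² function with L(u,z,ξ) ≥ 0 for every z ∈ ℂᵏ and every ξ ∈ Γ_z. Then for every nonempty bounded open set U ⊆ ℂᵏ and every x in the closure of U, u(x) ≤ sup_{ζ ∈ ∂U} u(ζ). -/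
noncomputable section

open Set Filter Topology

/-- If `g` has derivative `g'` everywhere, `g'` has derivative `d` at `0`, and `g` has a
local max at `0`, then `d ≤ 0`. -/
lemma deriv2_nonpos_of_isLocalMax {g g' : ℝ → ℝ} (hg : ∀ t, HasDerivAt g (g' t) t)
    {d : ℝ} (hg' : HasDerivAt g' d 0) (hmax : IsLocalMax g 0) : d ≤ 0 := by
  by_contra hd
  push_neg at hd
  have h0 : g' 0 = 0 := by
    have h := hmax.deriv_eq_zero
    rwa [(hg 0).deriv] at h
  have hslope : Tendsto (slope g' 0) (𝓝[≠] 0) (𝓝 d) :=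
    hasDerivAt_iff_tendsto_slope.mp hg'
  have hmem : {y : ℝ | 0 < y} ∈ 𝓝 d := (isOpen_lt continuous_const continuous_id).mem_nhds hd
  have h1 : ∀ᶠ t in 𝓝[≠] (0:ℝ), 0 < slope g' 0 t := hslope.eventually_mem hmem
  have h2 : ∀ᶠ t in 𝓝[>] (0:ℝ), 0 < g' t := by
    have hle : 𝓝[>] (0:ℝ) ≤ 𝓝[≠] (0:ℝ) :=
      nhdsWithin_mono _ (fun x hx => ne_of_gt hx)
    filter_upwards [hle h1, self_mem_nhdsWithin] with t ht ht0
    have hts : slope g' 0 t = g' t / t := by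
      simp [slope_def_field, h0]
    rw [hts] at ht
    have := mul_pos ht (show (0:ℝ) < t from ht0)
    rwa [div_mul_cancel₀] at this
    exact ne_of_gt ht0
  obtain ⟨δ, hδ0, hδ⟩ : ∃ δ, δ ∈ Ioi (0:ℝ) ∧ Ioo 0 δ ⊆ {t | 0 < g' t} :=
    mem_nhdsGT_iff_exists_Ioo_subset.mp h2
  have h3 : ∀ᶠ t in 𝓝[>] (0:ℝ), g t ≤ g 0 ∧ t < δ := by
    have hA : ∀ᶠ t in 𝓝[>] (0:ℝ), g t ≤ g 0 := nhdsWithin_le_nhds hmax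
    have hB : ∀ᶠ t in 𝓝[>] (0:ℝ), t < δ :=
      eventually_nhdsWithin_of_eventually_nhds (eventually_lt_nhds hδ0)
    exact hA.and hB
  obtain ⟨t, ⟨hgle, htδ⟩, ht0⟩ := (h3.and self_mem_nhdsWithin).exists
  have hcont : Continuous g := by
    rw [continuous_iff_continuousAt]; exact fun t => (hg t).continuousAt
  have hmono : StrictMonoOn g (Icc 0 t) := by
    apply strictMonoOn_of_deriv_pos (convex_Icc 0 t) hcont.continuousOn
    intro x hx
    rw [interior_Icc] at hx
    rw [(hg x).deriv]
    exact hδ ⟨hx.1, lt_trans hx.2 htδ⟩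
  have : g 0 < g t := hmono (left_mem_Icc.mpr (le_of_lt ht0))
    (right_mem_Icc.mpr (le_of_lt ht0)) ht0
  exact absurd hgle (not_le.mpr this)

variable {E : Type*} [NormedAddCommGroup E] [NormedSpace ℝ E]

/-- Key second-derivative inequality along a line at a local max of a perturbed function. -/
lemma line_max {u : E → ℝ} (hu : ContDiff ℝ 2 u) (z ξ : E) (ε a b e : ℝ)
    (hmax : IsLocalMax (fun t : ℝ => u (z + t • ξ) + ε * (a + b * t + e * t ^ 2)) 0) :
    fderiv ℝ (fderiv ℝ u) z ξ ξ + ε * (2 * e) ≤ 0 := by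
  have hud : Differentiable ℝ u := hu.differentiable (by norm_num)
  have hc : ∀ t : ℝ, HasDerivAt (fun s : ℝ => z + s • ξ) ξ t := by
    intro t
    simpa using ((hasDerivAt_id t).smul_const ξ).const_add z
  set g' : ℝ → ℝ := fun t => fderiv ℝ u (z + t • ξ) ξ + ε * (b + 2 * e * t) with hg'def
  have hg : ∀ t, HasDerivAt (fun s => u (z + s • ξ) + ε * (a + b * s + e * s ^ 2)) (g' t) t := by
    intro t
    have h1 : HasDerivAt (fun s : ℝ => u (z + s • ξ)) (fderiv ℝ u (z + t • ξ) ξ) t :=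
      (hud (z + t • ξ)).hasFDerivAt.comp_hasDerivAt t (hc t)
    have h2 : HasDerivAt (fun s : ℝ => ε * (a + b * s + e * s ^ 2)) (ε * (b + 2 * e * t)) t := by
      have hb1 : HasDerivAt (fun s : ℝ => a + b * s) b t := by
        simpa using ((hasDerivAt_id t).const_mul b).const_add a
      have hp : HasDerivAt (fun s : ℝ => e * s ^ 2) (2 * e * t) t := by
        have := (hasDerivAt_pow 2 t).const_mul e
        refine this.congr_deriv ?_
        push_cast
        ring
      have := (hb1.add hp).const_mul ε
      exact this
    exact h1.add h2
  have hH : ContDiff ℝ 1 (fderiv ℝ u) := hu.fderiv_right (le_refl _)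
  have h0 : z + (0:ℝ) • ξ = z := by simp
  have hHz : HasFDerivAt (fderiv ℝ u) (fderiv ℝ (fderiv ℝ u) z) z :=
    ((hH.differentiable one_ne_zero) z).hasFDerivAt
  have hcomp : HasDerivAt (fun t : ℝ => fderiv ℝ u (z + t • ξ)) (fderiv ℝ (fderiv ℝ u) z ξ) 0 := by
    rw [← h0] at hHz
    have hcd := hHz.comp_hasDerivAt 0 (hc 0)
    simp only [h0] at hcd
    exact hcd
  have happly : HasDerivAt (fun t : ℝ => fderiv ℝ u (z + t • ξ) ξ)
      (fderiv ℝ (fderiv ℝ u) z ξ ξ) 0 := by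
    simpa using hcomp.clm_apply (hasDerivAt_const 0 ξ)
  have hpoly : HasDerivAt (fun t : ℝ => ε * (b + 2 * e * t)) (ε * (2 * e)) 0 := by
    have : HasDerivAt (fun t : ℝ => b + 2 * e * t) (2 * e) 0 := by
      simpa using ((hasDerivAt_id (0:ℝ)).const_mul (2 * e)).const_add b
    simpa using this.const_mul ε
  exact deriv2_nonpos_of_isLocalMax hg (happly.add hpoly) hmax

/-- A system of `m < k` linear functionals on `ℂᵏ` has a common nonzero kernel vector. -/
lemma exists_ker_dir {k m : ℕ} (hmk : m < k) (f : Fin m → (Ck k →L[ℂ] ℂ)) :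
    ∃ ξ : Ck k, ξ ≠ 0 ∧ ∀ j, f j ξ = 0 := by
  set T : Ck k →ₗ[ℂ] (Fin m → ℂ) :=
    LinearMap.pi (fun j => (f j : Ck k →ₗ[ℂ] ℂ)) with hT
  have hrank := LinearMap.finrank_range_add_finrank_ker T
  have hdom : Module.finrank ℂ (Ck k) = k := finrank_euclideanSpace_fin
  have hr : Module.finrank ℂ (LinearMap.range T) ≤ m := by
    have := (LinearMap.range T).finrank_le
    simpa using this.trans_eq (by simp)
  have hker : LinearMap.ker T ≠ ⊥ := by
    intro hbot
    rw [hbot] at hrank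
    simp [hdom] at hrank
    omega
  obtain ⟨ξ, hmem, hne⟩ := Submodule.exists_mem_ne_zero_of_ne_bot hker
  refine ⟨ξ, hne, fun j => ?_⟩
  have hTz : T ξ = 0 := hmem
  have := congrFun hTz j
  simpa [hT] using this

lemma itd2_eq {k : ℕ} (u : Ck k → ℝ) (z ξ : Ck k) :
    iteratedFDeriv ℝ 2 u z ![ξ, ξ] = fderiv ℝ (fderiv ℝ u) z ξ ξ := by
  rw [iteratedFDeriv_two_apply]
  simp

lemma norm_line_sq {k : ℕ} (z ξ : Ck k) (t : ℝ) :
    ‖z + t • ξ‖ ^ 2 = ‖z‖ ^ 2 + (2 * Complex.re (inner ℂ z ξ : ℂ)) * t + ‖ξ‖ ^ 2 * t ^ 2 := by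
  have h1 : t • ξ = (t : ℂ) • ξ := by simp
  rw [h1, norm_add_sq (𝕜 := ℂ), inner_smul_right]
  have h2 : (RCLike.re ((t:ℂ) * (inner ℂ z ξ : ℂ)) : ℝ) = t * Complex.re (inner ℂ z ξ : ℂ) := by
    simp [Complex.mul_re]
  have h3 : ‖(t:ℂ) • ξ‖ ^ 2 = t ^ 2 * ‖ξ‖ ^ 2 := by
    rw [norm_smul, Complex.norm_real, mul_pow, Real.norm_eq_abs, sq_abs]
  rw [h2, h3]
  ring

/-- (The Pfaff-system case of Theorem 3.8, as in Remark 3.9.)  Let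
`α₁, …, α_m` be continuous `(1,0)`-forms on `ℂᵏ` with `m ≤ k−1`, and let
`Γ_z = ⋂ⱼ ker αⱼ(z)`.  If `u` is `C²` with nonnegative Levi form in the
directions of `Γ`, then `u` satisfies the maximum principle on every nonempty
bounded open set: `u(x) ≤ sup_{∂U} u` for all `x ∈ closure U`. -/
theorem pfaff_max_principle {k m : ℕ} (hk : 2 ≤ k) (hm : 1 ≤ m)
    (hmk : m ≤ k - 1)
    (α : Fin m → (Ck k → (Ck k →L[ℂ] ℂ)))
    (hα : ∀ j : Fin m, Continuous (α j))
    (u : Ck k → ℝ) (hu : ContDiff ℝ 2 u)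
    (hLevi : ∀ z ξ : Ck k, (∀ j : Fin m, α j z ξ = 0) → 0 ≤ Levi u z ξ) :
    ∀ U : Set (Ck k), IsOpen U → U.Nonempty → Bornology.IsBounded U →
      ∀ x ∈ closure U, u x ≤ sSup (u '' frontier U) := by
  intro U hUopen hUne hUbd x hx
  by_contra hgt
  push_neg at hgt
  set B := sSup (u '' frontier U) with hB
  have hKc : IsCompact (closure U) :=
    Metric.isCompact_of_isClosed_isBounded isClosed_closure hUbd.closure
  have hfc : IsCompact (frontier U) :=
    hKc.of_isClosed_subset isClosed_frontier frontier_subset_closure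
  have hBddA : BddAbove (u '' frontier U) := (hfc.image hu.continuous).bddAbove
  have hle_B : ∀ ζ ∈ frontier U, u ζ ≤ B := fun ζ hζ => le_csSup hBddA ⟨ζ, hζ, rfl⟩
  obtain ⟨C, hC⟩ : ∃ C, ∀ w ∈ closure U, ‖w‖ ^ 2 ≤ C := by
    obtain ⟨C, hC⟩ := (hKc.image ((continuous_norm).pow 2)).bddAbove
    exact ⟨C, fun w hw => hC ⟨w, hw, rfl⟩⟩
  have hC0 : (0:ℝ) ≤ C := le_trans (sq_nonneg _) (hC x hx)
  set ε : ℝ := (u x - B) / (2 * (C + 1)) with hεdef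
  have hε : 0 < ε := div_pos (by linarith) (by linarith)
  set v : Ck k → ℝ := fun w => u w + ε * ‖w‖ ^ 2 with hv
  have hvcont : Continuous v :=
    hu.continuous.add (continuous_const.mul ((continuous_norm).pow 2))
  obtain ⟨z₁, hz₁cl, hz₁max⟩ := hKc.exists_isMaxOn ⟨x, hx⟩ hvcont.continuousOn
  have hfr_lt : ∀ ζ ∈ frontier U, v ζ < v z₁ := by
    intro ζ hζ
    have h1 : v ζ ≤ B + ε * C :=
      add_le_add (hle_B ζ hζ)
        (mul_le_mul_of_nonneg_left (hC ζ (frontier_subset_closure hζ)) hε.le)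
    have h2 : B + ε * (2 * (C + 1)) = u x := by
      rw [hεdef]; field_simp; ring
    have h3 : v x ≤ v z₁ := hz₁max hx
    have h4 : u x ≤ v x := le_add_of_nonneg_right (by positivity)
    have h5 : ε * C < ε * (2 * (C + 1)) := by nlinarith
    linarith
  have hz₁U : z₁ ∈ U := by
    by_contra hno
    have hζ : z₁ ∈ frontier U := by
      rw [hUopen.frontier_eq]; exact ⟨hz₁cl, hno⟩
    exact absurd (hfr_lt z₁ hζ) (lt_irrefl _)
  have hloc : IsLocalMax v z₁ :=
    Filter.eventually_of_mem (hUopen.mem_nhds hz₁U) (fun w hw => hz₁max (subset_closure hw))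
  obtain ⟨ξ, hξ0, hξker⟩ := exists_ker_dir (show m < k by omega) (fun j => α j z₁)
  -- local max along any line through z₁, in polynomial form
  have hline : ∀ η : Ck k, IsLocalMax (fun t : ℝ => u (z₁ + t • η) +
      ε * (‖z₁‖ ^ 2 + (2 * Complex.re (inner ℂ z₁ η : ℂ)) * t + ‖η‖ ^ 2 * t ^ 2)) 0 := by
    intro η
    have hcont : Continuous (fun t : ℝ => z₁ + t • η) :=
      continuous_const.add (continuous_id.smul continuous_const)
    have ht : Tendsto (fun t : ℝ => z₁ + t • η) (𝓝 0) (𝓝 z₁) := by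
      have := hcont.tendsto 0
      simpa using this
    have hmax2 : IsLocalMax (fun t : ℝ => v (z₁ + t • η)) 0 := by
      refine (ht.eventually hloc).mono ?_
      intro t htt
      simpa using htt
    have hfun : (fun t : ℝ => u (z₁ + t • η) +
        ε * (‖z₁‖ ^ 2 + (2 * Complex.re (inner ℂ z₁ η : ℂ)) * t + ‖η‖ ^ 2 * t ^ 2)) =
        fun t : ℝ => v (z₁ + t • η) := by
      funext t
      rw [hv]
      simp only []
      rw [norm_line_sq]
    rw [hfun]
    exact hmax2
  have h1 := line_max hu z₁ ξ ε _ _ _ (hline ξ)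
  have h2 := line_max hu z₁ ((Complex.I : ℂ) • ξ) ε _ _ _ (hline ((Complex.I : ℂ) • ξ))
  have hnormI : ‖(Complex.I : ℂ) • ξ‖ ^ 2 = ‖ξ‖ ^ 2 := by
    rw [norm_smul, Complex.norm_I, one_mul]
  rw [hnormI] at h2
  have hL := hLevi z₁ ξ hξker
  rw [Levi, itd2_eq, itd2_eq] at hL
  have hξpos : (0:ℝ) < ‖ξ‖ ^ 2 := pow_pos (norm_pos_iff.mpr hξ0) 2
  nlinarith [mul_pos hε hξpos]
end
end
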